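/- arXiv:0705.1532 — 4 statements merged into one kernel-verified Lean document; each statement's English description precedes it below -/
import Mathlib

section
/- Define polynomials τ_n by τ₀(u)=1, τ₁(u)=u and τ_{n+1} = (1/n)·Dτ_n for n ≥ 1, where (Dp)(u) = (1−u²)·p′(u). Then: (1) for every u ∈ [−1,1] there is δ > 0 such that for all real d with |d| < δ one has (u + tanh d)/(1 + u·tanh d) = Σ_{n=0}^{∞} τ_{n+1}(u)·d^n, the series converging absolutely; (2) τ_n has degree exactly n for every n; (3) for every n ≥ 1 and every real z, τ_n(tanh z) = (1/(n−1)!)·(d/dz)^{n−1}(tanh z). -/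
open Polynomial

/-- The operator `D` on polynomials: `(Dp)(u) = (1 - u²)·p′(u)`. -/
noncomputable def Dop (p : Polynomial ℝ) : Polynomial ℝ := (1 - X ^ 2) * derivative p

/-- The polynomials τ_n: τ₀ = 1, τ₁ = X, τ_{n+1} = (1/n)·D τ_n for n ≥ 1. -/
noncomputable def tau : ℕ → Polynomial ℝ
  | 0 => 1
  | 1 => X
  | n + 2 => (((n + 1 : ℕ) : ℝ))⁻¹ • Dop (tau (n + 1))

lemma tanh_eq_exp (x : ℝ) :
    Real.tanh x = (Real.exp (2 * x) - 1) / (Real.exp (2 * x) + 1) := by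
  have hE : Real.exp x ≠ 0 := (Real.exp_pos x).ne'
  have h2 : Real.exp (2 * x) = Real.exp x * Real.exp x := by
    rw [two_mul, Real.exp_add]
  rw [Real.tanh_eq_sinh_div_cosh, Real.sinh_eq, Real.cosh_eq, Real.exp_neg, h2]
  have hne : Real.exp x + (Real.exp x)⁻¹ ≠ 0 := by positivity
  have hne2 : Real.exp x * Real.exp x + 1 ≠ 0 := by positivity
  field_simp

lemma abs_tanh_lt_one (x : ℝ) : |Real.tanh x| < 1 := by
  rw [tanh_eq_exp, abs_lt]
  have h1 : (0:ℝ) < Real.exp (2*x) := Real.exp_pos _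
  constructor
  · rw [lt_div_iff₀ (by linarith)]; linarith
  · rw [div_lt_iff₀ (by linarith)]; linarith

lemma my_tanh_add (x y : ℝ) :
    Real.tanh (x + y) = (Real.tanh x + Real.tanh y) / (1 + Real.tanh x * Real.tanh y) := by
  have hx := abs_lt.1 (abs_tanh_lt_one x)
  have hy := abs_lt.1 (abs_tanh_lt_one y)
  have hpos : (0:ℝ) < 1 + Real.tanh x * Real.tanh y := by nlinarith
  rw [eq_div_iff hpos.ne']
  have hxy : Real.exp (2 * (x + y)) = Real.exp (2*x) * Real.exp (2*y) := by
    rw [← Real.exp_add]; ring_nf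
  rw [tanh_eq_exp, tanh_eq_exp, tanh_eq_exp, hxy]
  have h1 : Real.exp (2*x) + 1 ≠ 0 := by positivity
  have h2 : Real.exp (2*y) + 1 ≠ 0 := by positivity
  have h3 : Real.exp (2*x) * Real.exp (2*y) + 1 ≠ 0 := by positivity
  field_simp
  ring

lemma my_hasDerivAt_tanh (x : ℝ) : HasDerivAt Real.tanh (1 - Real.tanh x ^ 2) x := by
  have h := (Real.hasDerivAt_sinh x).div (Real.hasDerivAt_cosh x) (Real.cosh_pos x).ne'
  have hfun : (Real.sinh / Real.cosh) = Real.tanh :=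
    funext fun y => (Real.tanh_eq_sinh_div_cosh y).symm
  rw [hfun] at h
  refine h.congr_deriv ?_
  have hc : Real.cosh x ≠ 0 := (Real.cosh_pos x).ne'
  have hid : Real.cosh x ^ 2 - Real.sinh x ^ 2 = 1 := Real.cosh_sq_sub_sinh_sq x
  rw [Real.tanh_eq_sinh_div_cosh]
  field_simp

lemma iteratedDeriv_tanh_eq (n : ℕ) (z : ℝ) :
    iteratedDeriv n Real.tanh z = (n.factorial : ℝ) * (tau (n + 1)).eval (Real.tanh z) := by
  induction n generalizing z with
  | zero => simp [tau]
  | succ n ih =>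
    rw [iteratedDeriv_succ]
    have hfe : iteratedDeriv n Real.tanh
        = fun w => (n.factorial : ℝ) * (tau (n + 1)).eval (Real.tanh w) := funext fun w => ih w
    rw [hfe]
    have hd : HasDerivAt (fun w => (n.factorial : ℝ) * (tau (n+1)).eval (Real.tanh w))
        ((n.factorial : ℝ) * ((derivative (tau (n+1))).eval (Real.tanh z) * (1 - Real.tanh z ^ 2))) z :=
      HasDerivAt.const_mul _
        (((tau (n+1)).hasDerivAt (Real.tanh z)).comp z (my_hasDerivAt_tanh z))
    rw [hd.deriv]
    have ht : tau (n + 1 + 1) = (((n + 1 : ℕ) : ℝ))⁻¹ • Dop (tau (n + 1)) := rfl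
    rw [ht]
    have hne : ((n + 1 : ℕ) : ℝ) ≠ 0 := by positivity
    simp only [eval_smul, Dop, eval_mul, eval_sub, eval_one, eval_pow, eval_X,
      Nat.factorial_succ, smul_eq_mul]
    push_cast
    field_simp

lemma tau_degree (n : ℕ) : (tau (n+1)).degree = ((n+1 : ℕ) : WithBot ℕ) := by
  induction n with
  | zero => exact degree_X
  | succ n ih =>
    have h1 : (tau (n+1)).natDegree = n+1 := natDegree_eq_of_degree_eq_some ih
    have hder : (derivative (tau (n+1))).degree = ((n : ℕ) : WithBot ℕ) := by
      rw [degree_derivative_eq _ (by omega : 0 < (tau (n+1)).natDegree), h1]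
      norm_num
    have hquad : ((1 : ℝ[X]) - X^2).degree = 2 := by
      compute_degree!
    have hD : (Dop (tau (n+1))).degree = ((n+2 : ℕ) : WithBot ℕ) := by
      rw [Dop, degree_mul, hquad, hder]
      push_cast
      rw [add_comm]
    have hne : (((n + 1 : ℕ) : ℝ))⁻¹ ≠ 0 := by positivity
    have ht : tau (n + 1 + 1) = (((n + 1 : ℕ) : ℝ))⁻¹ • Dop (tau (n + 1)) := rfl
    rw [ht, smul_eq_C_mul, degree_mul, degree_C hne, hD, zero_add]

lemma coeff_eq {p : FormalMultilinearSeries ℝ ℝ ℝ} {z : ℝ} {r : ENNReal}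
    (hr : HasFPowerSeriesOnBall Real.tanh p z r) (n : ℕ) :
    p.coeff n = (tau (n + 1)).eval (Real.tanh z) := by
  have h1 : (n.factorial) • p n (fun _ => (1:ℝ)) = iteratedFDeriv ℝ n Real.tanh z (fun _ => 1) :=
    hr.factorial_smul 1 n
  have h2 : iteratedFDeriv ℝ n Real.tanh z (fun _ => (1:ℝ)) = iteratedDeriv n Real.tanh z := rfl
  have h3 := iteratedDeriv_tanh_eq n z
  rw [h2, h3] at h1
  have hfac : (n.factorial : ℝ) ≠ 0 := by positivity
  have : (n.factorial : ℝ) * p.coeff n = (n.factorial : ℝ) * (tau (n + 1)).eval (Real.tanh z) := by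
    rw [← h1, nsmul_eq_mul]
    rfl
  exact mul_left_cancel₀ hfac this

theorem stmt_0 :
    (∀ u : ℝ, u ∈ Set.Icc (-1 : ℝ) 1 → ∃ δ > (0 : ℝ), ∀ d : ℝ, |d| < δ →
      HasSum (fun n : ℕ => (tau (n + 1)).eval u * d ^ n)
        ((u + Real.tanh d) / (1 + u * Real.tanh d)) ∧
      Summable (fun n : ℕ => |(tau (n + 1)).eval u * d ^ n|)) ∧
    (∀ n : ℕ, (tau n).degree = (n : WithBot ℕ)) ∧
    (∀ n : ℕ, 1 ≤ n → ∀ z : ℝ,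
      (tau n).eval (Real.tanh z)
        = (1 / (Nat.factorial (n - 1) : ℝ)) * iteratedDeriv (n - 1) Real.tanh z) := by
  refine ⟨?_, ?_, ?_⟩
  · intro u hu
    by_cases habs : |u| < 1
    · -- main case |u| < 1
      obtain ⟨hu1, hu2⟩ := abs_lt.1 habs
      set z := Real.log ((1 + u) / (1 - u)) / 2 with hzdef
      have h1u : (0:ℝ) < 1 - u := by linarith
      have h2u : (0:ℝ) < 1 + u := by linarith
      have htz : Real.tanh z = u := by
        rw [tanh_eq_exp]
        have h2z : 2 * z = Real.log ((1 + u) / (1 - u)) := by rw [hzdef]; ring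
        rw [h2z, Real.exp_log (by positivity)]
        have e1 : (1 + u) / (1 - u) - 1 = (2 * u) / (1 - u) := by
          field_simp
          ring
        have e2 : (1 + u) / (1 - u) + 1 = 2 / (1 - u) := by
          field_simp
          norm_num
        rw [e1, e2, div_div_div_comm, div_self h1u.ne', div_one]
        ring
      have ha : AnalyticAt ℝ Real.tanh z := by
        have hts : Real.tanh = fun x : ℝ => Real.sinh x / Real.cosh x :=
          funext fun x => Real.tanh_eq_sinh_div_cosh x
        have hsinh : Real.sinh = fun x : ℝ => (Real.exp x - Real.exp (-x)) / 2 :=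
          funext fun x => Real.sinh_eq x
        have hcosh : Real.cosh = fun x : ℝ => (Real.exp x + Real.exp (-x)) / 2 :=
          funext fun x => Real.cosh_eq x
        have hne : AnalyticAt ℝ (fun x : ℝ => Real.exp (-x)) z :=
          AnalyticAt.rexp analyticAt_id.neg
        have hs : AnalyticAt ℝ Real.sinh z := by
          rw [hsinh]; exact (analyticAt_rexp.sub hne).div analyticAt_const (by norm_num)
        have hc : AnalyticAt ℝ Real.cosh z := by
          rw [hcosh]; exact (analyticAt_rexp.add hne).div analyticAt_const (by norm_num)
        rw [hts]; exact hs.div hc (Real.cosh_pos z).ne'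
      obtain ⟨p, hp⟩ := ha
      obtain ⟨r, hr⟩ := hp
      obtain ⟨q, hq0, hqr⟩ := ENNReal.lt_iff_exists_nnreal_btwn.1 hr.r_pos
      have hq0' : (0:ℝ) < (q:ℝ) := by exact_mod_cast hq0
      refine ⟨(q:ℝ), hq0', fun d hd => ?_⟩
      have hdq : ‖d‖₊ < q := by
        rw [← NNReal.coe_lt_coe]; simpa [Real.norm_eq_abs] using hd
      have hmem : d ∈ Metric.eball (0:ℝ) r := by
        rw [mem_emetric_ball_zero_iff]
        exact lt_trans (by exact_mod_cast hdq) hqr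
      have hsum0 := hr.hasSum hmem
      have hterm : ∀ n : ℕ, (p n fun _ => d) = (tau (n + 1)).eval u * d ^ n := by
        intro n
        rw [FormalMultilinearSeries.apply_eq_pow_smul_coeff, coeff_eq hr, htz,
          smul_eq_mul]
        ring
      have hsum : HasSum (fun n : ℕ => (tau (n + 1)).eval u * d ^ n) (Real.tanh (z + d)) := by
        rw [← funext hterm]; exact hsum0
      have hval : Real.tanh (z + d) = (u + Real.tanh d) / (1 + u * Real.tanh d) := by
        rw [my_tanh_add, htz]
      constructor
      · rw [← hval]; exact hsum
      · have hs : Summable (fun n : ℕ => ‖p n‖ * (q:ℝ) ^ n) :=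
          p.summable_norm_mul_pow (lt_of_lt_of_le hqr hr.r_le)
        refine Summable.of_nonneg_of_le (fun n => abs_nonneg _) (fun n => ?_) hs
        rw [abs_mul, abs_pow]
        have hc : |(tau (n + 1)).eval u| = ‖p n‖ := by
          rw [p.norm_apply_eq_norm_coef, coeff_eq hr, htz, Real.norm_eq_abs]
        rw [hc]
        gcongr
    · -- |u| = 1
      have h1 : |u| = 1 := le_antisymm (abs_le.2 ⟨hu.1, hu.2⟩) (not_lt.1 habs)
      have hu2 : u ^ 2 = 1 := by rw [← sq_abs, h1, one_pow]
      refine ⟨1, one_pos, fun d _ => ?_⟩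
      have hterm : ∀ n : ℕ, n ≠ 0 → (tau (n + 1)).eval u * d ^ n = 0 := by
        intro n hn
        obtain ⟨m, rfl⟩ := Nat.exists_eq_succ_of_ne_zero hn
        have ht : tau (m + 1 + 1) = (((m + 1 : ℕ) : ℝ))⁻¹ • Dop (tau (m + 1)) := rfl
        rw [ht]
        simp [Dop, hu2]
      have hs0 : HasSum (fun n : ℕ => (tau (n + 1)).eval u * d ^ n)
          ((tau (0 + 1)).eval u * d ^ 0) := hasSum_single 0 hterm
      have huv : (u + Real.tanh d) / (1 + u * Real.tanh d) = u := by
        have habs' := abs_lt.1 (abs_tanh_lt_one d)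
        have hpos : (0:ℝ) < 1 + u * Real.tanh d := by
          nlinarith [sq_nonneg (u + Real.tanh d), sq_nonneg (u - Real.tanh d),
            habs'.1, habs'.2]
        rw [div_eq_iff hpos.ne']
        linear_combination (-Real.tanh d) * hu2
      constructor
      · rw [huv]; simpa [tau] using hs0
      · exact (hasSum_single (f := fun n : ℕ => |(tau (n + 1)).eval u * d ^ n|) 0
          (fun b hb => by simp [hterm b hb])).summable
  · intro n
    match n with
    | 0 => simpa [tau] using (degree_one : (1 : ℝ[X]).degree = 0)
    | m + 1 => exact tau_degree m
  · intro n hn z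
    obtain ⟨m, rfl⟩ := Nat.exists_eq_succ_of_ne_zero (by omega : n ≠ 0)
    simp only [Nat.succ_sub_one]
    rw [iteratedDeriv_tanh_eq m z]
    have hfac : ((m.factorial : ℝ)) ≠ 0 := by positivity
    field_simp
end

section
/- Let ε(d) = (1/2)·sinh(2d), viewed as a formal power series in d. There exists a unique sequence (A_{2n+1})_{n≥0} of odd real polynomials with A₁(u) = u, deg A_{2n+1} ≤ 2n+1, and A_{2n+1}(1) = A_{2n+1}(−1) = 0 for all n ≥ 1, such that the polynomial series A(d,u) = Σ_{n≥0} A_{2n+1}(u)·d^{2n} satisfies sinh(dD)A = ε(d)·(1 − A(d,u)²) as an identity of formal power series in d with polynomial coefficients (equivalently, expanding formally in d, A(d, T^+(d,u)) − A(d, T^−(d,u)) = 2ε(d)·(1 − A(d,u)²)). -/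
open Polynomial Classical

/-- Coefficient of `z^i` in `sinh z`. -/
noncomputable def sinhCoeff (i : ℕ) : ℝ := if Odd i then ((Nat.factorial i : ℝ))⁻¹ else 0

/-- Coefficient of `d^j` in `ε(d) = (1/2)·sinh(2d)`. -/
noncomputable def epsCoeff (j : ℕ) : ℝ :=
  if Odd j then (2 : ℝ) ^ j / (2 * (Nat.factorial j : ℝ)) else 0

/-- The polynomial series `A(d,u) = Σ_n A_{2n+1}(u) d^{2n}`: its `d^m`-coefficient. -/
noncomputable def seriesOfA (A : ℕ → Polynomial ℝ) (m : ℕ) : Polynomial ℝ :=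
  if m % 2 = 0 then A (m / 2) else 0

/-- The `d^k`-coefficient of the polynomial series `1 - A(d,u)²`. -/
noncomputable def oneMinusSq (A : ℕ → Polynomial ℝ) (k : ℕ) : Polynomial ℝ :=
  (if k = 0 then 1 else 0) - ∑ i ∈ Finset.range (k + 1), seriesOfA A i * seriesOfA A (k - i)

/-- `A = (A_{2n+1})` is the formal solution of the discretized logistic equation:
`A₁ = u`, the `A_{2n+1}` are odd polynomials of degree at most `2n+1` vanishing at `±1`
for `n ≥ 1`, and `sinh(dD) A = ε(d)·(1 - A²)` coefficientwise in `d`. -/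
noncomputable def IsFormalSolution (A : ℕ → Polynomial ℝ) : Prop :=
  A 0 = X ∧
  (∀ n : ℕ, (A n).degree ≤ ((2 * n + 1 : ℕ) : WithBot ℕ)) ∧
  (∀ n : ℕ, ∀ x : ℝ, (A n).eval (-x) = -(A n).eval x) ∧
  (∀ n : ℕ, 1 ≤ n → (A n).eval 1 = 0 ∧ (A n).eval (-1) = 0) ∧
  (∀ m : ℕ,
    ∑ i ∈ Finset.range (m + 1), sinhCoeff i • Dop^[i] (seriesOfA A (m - i))
      = ∑ j ∈ Finset.range (m + 1), epsCoeff j • oneMinusSq A (m - j))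

namespace S5


def POdd (p : Polynomial ℝ) : Prop := p.comp (-X) = -p
def PEven (p : Polynomial ℝ) : Prop := p.comp (-X) = p

lemma podd_iff_eval {p : Polynomial ℝ} : POdd p ↔ ∀ x : ℝ, p.eval (-x) = -p.eval x := by
  constructor
  · intro h x
    have := congrArg (Polynomial.eval x) h
    simpa [Polynomial.eval_comp] using this
  · intro h
    apply Polynomial.funext
    intro x
    simp [Polynomial.eval_comp, h x]

lemma POdd.X : POdd (X : Polynomial ℝ) := by simp [POdd]

lemma deriv_comp_neg (p : Polynomial ℝ) :
    derivative (p.comp (-X)) = -((derivative p).comp (-X)) := by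
  rw [Polynomial.derivative_comp]; simp

lemma one_sub_X_sq_comp : ((1 - X ^ 2 : Polynomial ℝ)).comp (-X) = 1 - X ^ 2 := by
  simp [sub_comp, pow_comp, neg_pow]

lemma PEven_Dop {p : Polynomial ℝ} (h : POdd p) : PEven (Dop p) := by
  unfold Dop PEven
  rw [mul_comp, one_sub_X_sq_comp]
  have h2 := deriv_comp_neg p
  rw [h, derivative_neg] at h2
  have h3 : (derivative p).comp (-X) = derivative p := by
    have := neg_injective h2
    exact this.symm
  rw [h3]

lemma POdd_Dop {p : Polynomial ℝ} (h : PEven p) : POdd (Dop p) := by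
  unfold Dop POdd
  rw [mul_comp, one_sub_X_sq_comp]
  have h2 := deriv_comp_neg p
  rw [h] at h2
  have h3 : (derivative p).comp (-X) = -derivative p := by
    have := congrArg Neg.neg h2
    simpa using this.symm
  rw [h3]; ring

lemma PEven_Dop_iter_odd {p : Polynomial ℝ} (h : POdd p) (l : ℕ) :
    PEven (Dop^[2 * l + 1] p) := by
  induction l with
  | zero => simpa using PEven_Dop h
  | succ k ih =>
      have e : 2 * (k + 1) + 1 = (2 * k + 1) + 1 + 1 := by ring
      rw [e, Function.iterate_succ_apply', Function.iterate_succ_apply']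
      exact PEven_Dop (POdd_Dop ih)

lemma eval_Dop_one (p : Polynomial ℝ) : (Dop p).eval 1 = 0 := by simp [Dop]
lemma eval_Dop_neg_one (p : Polynomial ℝ) : (Dop p).eval (-1) = 0 := by simp [Dop]

lemma eval_Dop_iter_one (p : Polynomial ℝ) (i : ℕ) :
    (Dop^[i + 1] p).eval 1 = 0 := by
  rw [Function.iterate_succ_apply']; exact eval_Dop_one _

lemma eval_Dop_iter_neg_one (p : Polynomial ℝ) (i : ℕ) :
    (Dop^[i + 1] p).eval (-1) = 0 := by
  rw [Function.iterate_succ_apply']; exact eval_Dop_neg_one _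

lemma deriv_Dop_eval_one (p : Polynomial ℝ) :
    (derivative (Dop p)).eval 1 = -2 * (derivative p).eval 1 := by
  unfold Dop
  rw [derivative_mul]
  simp
  norm_num

lemma deriv_Dop_eval_neg_one (p : Polynomial ℝ) :
    (derivative (Dop p)).eval (-1) = 2 * (derivative p).eval (-1) := by
  unfold Dop
  rw [derivative_mul]
  simp
  ring

lemma deriv_Dop_iter_eval_one (p : Polynomial ℝ) (i : ℕ) :
    (derivative (Dop^[i] p)).eval 1 = (-2) ^ i * (derivative p).eval 1 := by
  induction i with
  | zero => simp
  | succ k ih =>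
      rw [Function.iterate_succ_apply', deriv_Dop_eval_one, ih, pow_succ]
      ring

lemma deriv_Dop_iter_eval_neg_one (p : Polynomial ℝ) (i : ℕ) :
    (derivative (Dop^[i] p)).eval (-1) = 2 ^ i * (derivative p).eval (-1) := by
  induction i with
  | zero => simp
  | succ k ih =>
      rw [Function.iterate_succ_apply', deriv_Dop_eval_neg_one, ih, pow_succ]
      ring

lemma Dop_zero : Dop 0 = 0 := by simp [Dop]

lemma Dop_iter_zero (i : ℕ) : Dop^[i] 0 = 0 := Function.iterate_fixed Dop_zero i

lemma natDegree_Dop_le (p : Polynomial ℝ) : (Dop p).natDegree ≤ p.natDegree + 1 := by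
  by_cases h : p.natDegree = 0
  · obtain ⟨a, rfl⟩ := Polynomial.natDegree_eq_zero.mp h
    simp [Dop]
  · refine le_trans (Polynomial.natDegree_mul_le) ?_
    have h1 : (1 - X ^ 2 : Polynomial ℝ).natDegree ≤ 2 := by
      refine le_trans (Polynomial.natDegree_sub_le _ _) ?_
      simp
    have h2 : (derivative p).natDegree ≤ p.natDegree - 1 := Polynomial.natDegree_derivative_le p
    omega

lemma natDegree_Dop_iter_le (p : Polynomial ℝ) (i : ℕ) :
    (Dop^[i] p).natDegree ≤ p.natDegree + i := by
  induction i with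
  | zero => simp
  | succ k ih =>
      rw [Function.iterate_succ_apply']
      have := natDegree_Dop_le (Dop^[k] p)
      omega



/-- Antiderivative with zero constant term. -/
noncomputable def intPoly (p : Polynomial ℝ) : Polynomial ℝ :=
  ∑ k ∈ Finset.range (p.natDegree + 1), C (p.coeff k / (k + 1)) * X ^ (k + 1)

lemma derivative_intPoly (p : Polynomial ℝ) : derivative (intPoly p) = p := by
  unfold intPoly
  rw [derivative_sum]
  have h : ∀ k ∈ Finset.range (p.natDegree + 1),
      derivative (C (p.coeff k / (k + 1)) * X ^ (k + 1)) = C (p.coeff k) * X ^ k := by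
    intro k _
    rw [derivative_C_mul, derivative_X_pow, ← mul_assoc, ← C_mul]
    congr 2
    push_cast
    rw [div_mul_cancel₀]
    positivity
  rw [Finset.sum_congr rfl h]
  conv_rhs => rw [p.as_sum_range' (p.natDegree + 1) (Nat.lt_succ_self _)]
  refine Finset.sum_congr rfl fun k _ => ?_
  rw [C_mul_X_pow_eq_monomial]

lemma coeff_zero_intPoly (p : Polynomial ℝ) : (intPoly p).coeff 0 = 0 := by
  unfold intPoly
  rw [Polynomial.finset_sum_coeff]
  refine Finset.sum_eq_zero fun k _ => ?_
  rw [Polynomial.coeff_C_mul, Polynomial.coeff_X_pow]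
  simp

lemma natDegree_intPoly_le (p : Polynomial ℝ) : (intPoly p).natDegree ≤ p.natDegree + 1 := by
  unfold intPoly
  refine Polynomial.natDegree_sum_le_of_forall_le _ _ fun k hk => ?_
  refine le_trans (Polynomial.natDegree_C_mul_le _ _) ?_
  simp only [Polynomial.natDegree_X_pow]
  exact Nat.succ_le_succ (Nat.lt_succ_iff.mp (Finset.mem_range.mp hk))

lemma intPoly_odd {p : Polynomial ℝ} (h : PEven p) : POdd (intPoly p) := by
  have hd : derivative ((intPoly p).comp (-X) + intPoly p) = 0 := by
    rw [derivative_add, deriv_comp_neg, derivative_intPoly, h]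
    ring
  obtain ⟨c, hc⟩ : ∃ c, (intPoly p).comp (-X) + intPoly p = C c :=
    ⟨_, Polynomial.eq_C_of_derivative_eq_zero hd⟩
  have e0 : (intPoly p).eval 0 = 0 := by
    rw [← Polynomial.coeff_zero_eq_eval_zero]; exact coeff_zero_intPoly p
  have h0 : ((intPoly p).comp (-X) + intPoly p).coeff 0 = 0 := by
    rw [Polynomial.coeff_zero_eq_eval_zero]
    simp [Polynomial.eval_comp, e0]
  rw [hc, Polynomial.coeff_C_zero] at h0
  rw [h0, C_0] at hc
  show (intPoly p).comp (-X) = -intPoly p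
  linear_combination hc

/-- Double root factorization. -/
lemma double_root {R : Polynomial ℝ} {a : ℝ} (h0 : R.eval a = 0)
    (h1 : (derivative R).eval a = 0) : ∃ T, R = (X - C a) ^ 2 * T := by
  obtain ⟨R1, hR1⟩ := (Polynomial.dvd_iff_isRoot.mpr h0)
  have hd : (derivative R).eval a = R1.eval a := by
    rw [hR1, derivative_mul]
    simp
  obtain ⟨T, hT⟩ := Polynomial.dvd_iff_isRoot.mpr (show R1.IsRoot a by
    unfold Polynomial.IsRoot; rw [← hd, h1])
  exact ⟨T, by rw [hR1, hT]; ring⟩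

lemma quad_sq_factor {R : Polynomial ℝ} (h1 : R.eval 1 = 0) (h1' : (derivative R).eval 1 = 0)
    (h2 : R.eval (-1) = 0) (h2' : (derivative R).eval (-1) = 0) :
    ∃ S, R = (X ^ 2 - 1) ^ 2 * S := by
  obtain ⟨T, hT⟩ := double_root h1 h1'
  have e1 : T.eval (-1) = 0 := by
    have := congrArg (Polynomial.eval (-1)) hT
    rw [h2] at this
    simp at this
    norm_num at this
    exact this
  have e2 : (derivative T).eval (-1) = 0 := by
    have hdT := congrArg derivative hT
    rw [derivative_mul] at hdT
    have := congrArg (Polynomial.eval (-1)) hdT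
    rw [h2'] at this
    simp [e1] at this
    norm_num at this
    exact this
  obtain ⟨S, hS⟩ := double_root e1 e2
  refine ⟨S, ?_⟩
  rw [hT, hS, C_1, show (C (-1:ℝ)) = -1 by simp]
  ring

lemma monic_quad_sq : ((X ^ 2 - 1 : Polynomial ℝ) ^ 2).Monic := by
  have : (X ^ 2 - 1 : Polynomial ℝ) = X ^ 2 - C 1 := by rw [C_1]
  rw [this]
  exact (Polynomial.monic_X_pow_sub_C (1 : ℝ) (by norm_num)).pow 2

/-- Key identity: L((1-X²)q) = (X²-1)² q'. -/
lemma L_eq (q : Polynomial ℝ) :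
    Dop ((1 - X ^ 2) * q) + (2 : ℝ) • (X * ((1 - X ^ 2) * q))
      = (X ^ 2 - 1) ^ 2 * derivative q := by
  unfold Dop
  rw [derivative_mul]
  simp only [Polynomial.smul_eq_C_mul]
  have hd : derivative (1 - X ^ 2 : Polynomial ℝ) = -(2 * X) := by
    simp [map_ofNat]
    norm_num
  rw [hd]
  have hC : (C (2:ℝ) : Polynomial ℝ) = 2 := map_ofNat C 2
  rw [hC]
  ring

/-- Injectivity of L on odd polynomials. -/
lemma coeff_comp_neg_X (p : Polynomial ℝ) (k : ℕ) :
    (p.comp (-X)).coeff k = (-1) ^ k * p.coeff k := by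
  induction p using Polynomial.induction_on' with
  | add p q hp hq => simp [add_comp, hp, hq]; ring
  | monomial n a =>
      rw [← C_mul_X_pow_eq_monomial, mul_comp, C_comp, pow_comp, X_comp, neg_pow]
      have : ((-1 : Polynomial ℝ)) ^ n = C ((-1 : ℝ) ^ n) := by
        rw [map_pow, map_neg, C_1]
      rw [this]
      rw [show C a * (C ((-1:ℝ)^n) * X ^ n) = C (a * (-1:ℝ)^n) * X ^ n by rw [C_mul]; ring]
      rw [Polynomial.coeff_C_mul, Polynomial.coeff_C_mul, Polynomial.coeff_X_pow]
      by_cases hnk : n = k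
      · subst hnk; simp; ring
      · simp [hnk, Ne.symm hnk]

lemma even_coeff_zero_of_odd {p : Polynomial ℝ} (h : POdd p) {k : ℕ} (hk : k % 2 = 0) :
    p.coeff k = 0 := by
  have hc := congrArg (fun q => Polynomial.coeff q k) h
  simp only [Polynomial.coeff_neg] at hc
  rw [coeff_comp_neg_X] at hc
  have : (-1 : ℝ) ^ k = 1 := by
    have : Even k := Nat.even_iff.mpr hk
    exact this.neg_one_pow
  rw [this, one_mul] at hc
  linarith

/-- Injectivity of L on odd polynomials. -/
lemma L_inj_odd {p : Polynomial ℝ} (h : POdd p)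
    (hL : Dop p + (2 : ℝ) • (X * p) = 0) : p = 0 := by
  by_contra hp
  set d := p.natDegree with hd
  have hd0 : p.coeff 0 = 0 := even_coeff_zero_of_odd h (by norm_num)
  have hd1 : 1 ≤ d := by
    by_contra hlt
    push_neg at hlt
    interval_cases d
    · exact hp (Polynomial.eq_C_of_natDegree_eq_zero hd.symm ▸ by
        rw [Polynomial.eq_C_of_natDegree_eq_zero hd.symm] at hd0 ⊢
        simp at hd0
        simp [hd0])
  have hcoeff : (Dop p + (2 : ℝ) • (X * p)).coeff (d + 1) = (2 - d) * p.coeff d := by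
    unfold Dop
    rw [Polynomial.coeff_add, Polynomial.smul_eq_C_mul]
    have e1 : ((1 - X ^ 2) * derivative p).coeff (d + 1)
        = (derivative p).coeff (d + 1) - (derivative p).coeff (d - 1) := by
      rw [sub_mul, one_mul, Polynomial.coeff_sub]
      congr 1
      rw [mul_comm, Polynomial.coeff_mul_X_pow']
      simp only [show d + 1 - 2 = d - 1 from by omega]
      rw [if_pos (by omega)]
    have e2 : (C (2:ℝ) * (X * p)).coeff (d + 1) = 2 * p.coeff d := by
      rw [Polynomial.coeff_C_mul]
      congr 1
      rw [show X * p = p * X ^ 1 by ring, Polynomial.coeff_mul_X_pow']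
      simp
    rw [e1, e2]
    have e3 : (derivative p).coeff (d + 1) = 0 := by
      apply Polynomial.coeff_eq_zero_of_natDegree_lt
      have := Polynomial.natDegree_derivative_le p
      omega
    have e4 : (derivative p).coeff (d - 1) = d * p.coeff d := by
      rw [Polynomial.coeff_derivative]
      rw [show d - 1 + 1 = d from by omega]
      push_cast [show ((d - 1 : ℕ) : ℝ) = (d : ℝ) - 1 from by
        have : (1:ℕ) ≤ d := hd1
        push_cast [Nat.cast_sub this]
        ring]
      ring
    rw [e3, e4]
    ring
  rw [hL] at hcoeff
  simp only [Polynomial.coeff_zero] at hcoeff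
  have hlead : p.coeff d ≠ 0 := by
    rw [hd]
    exact Polynomial.leadingCoeff_ne_zero.mpr hp
  have : (2 : ℝ) - d = 0 := by
    rcases mul_eq_zero.mp hcoeff.symm with h' | h'
    · exact h'
    · exact absurd h' hlead
  have hd2 : d = 2 := by
    have : (d : ℝ) = 2 := by linarith
    exact_mod_cast this
  have : p.coeff d = 0 := even_coeff_zero_of_odd h (by omega)
  exact hlead this


/-- Even-indexed coefficient of `1 - A²`. -/
noncomputable def Om (A : ℕ → Polynomial ℝ) (k : ℕ) : Polynomial ℝ :=
  (if k = 0 then 1 else 0) - ∑ a ∈ Finset.range (k + 1), A a * A (k - a)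

lemma sum_odd_helper {M : Type*} [AddCommMonoid M] (g : ℕ → M) (n : ℕ)
    (h : ∀ i, i % 2 = 0 → g i = 0) :
    ∑ i ∈ Finset.range (2 * n + 2), g i = ∑ l ∈ Finset.range (n + 1), g (2 * l + 1) := by
  induction n with
  | zero => simp [Finset.sum_range_succ, h 0 rfl]
  | succ m ih =>
      have e : 2 * (m + 1) + 2 = (2 * m + 2) + 1 + 1 := by ring
      rw [e, Finset.sum_range_succ, Finset.sum_range_succ, ih, h (2 * m + 2) (by omega),
        add_zero, show 2 * m + 2 + 1 = 2 * (m + 1) + 1 from by ring]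
      conv_rhs => rw [Finset.sum_range_succ]

lemma sum_even_helper {M : Type*} [AddCommMonoid M] (g : ℕ → M) (n : ℕ)
    (h : ∀ i, i % 2 = 1 → g i = 0) :
    ∑ i ∈ Finset.range (2 * n + 1), g i = ∑ l ∈ Finset.range (n + 1), g (2 * l) := by
  induction n with
  | zero => simp
  | succ m ih =>
      have e : 2 * (m + 1) + 1 = (2 * m + 1) + 1 + 1 := by ring
      rw [e, Finset.sum_range_succ, Finset.sum_range_succ, ih, h (2 * m + 1) (by omega),
        add_zero, show 2 * m + 1 + 1 = 2 * (m + 1) from by ring]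
      conv_rhs => rw [Finset.sum_range_succ]

lemma seriesOfA_even (A : ℕ → Polynomial ℝ) (a : ℕ) : seriesOfA A (2 * a) = A a := by
  unfold seriesOfA
  rw [if_pos (by omega)]
  congr 1
  omega

lemma seriesOfA_odd (A : ℕ → Polynomial ℝ) {i : ℕ} (h : i % 2 = 1) : seriesOfA A i = 0 := by
  unfold seriesOfA
  rw [if_neg (by omega)]

lemma oneMinusSq_odd (A : ℕ → Polynomial ℝ) {k : ℕ} (h : k % 2 = 1) : oneMinusSq A k = 0 := by
  unfold oneMinusSq
  rw [if_neg (by omega), Finset.sum_eq_zero, sub_zero]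
  intro i hi
  rcases Nat.even_or_odd i with he | ho
  · have : (k - i) % 2 = 1 := by
      have := Finset.mem_range.mp hi
      have : i % 2 = 0 := Nat.even_iff.mp he
      omega
    rw [seriesOfA_odd A this, mul_zero]
  · rw [seriesOfA_odd A (Nat.odd_iff.mp ho), zero_mul]

lemma oneMinusSq_even (A : ℕ → Polynomial ℝ) (k : ℕ) : oneMinusSq A (2 * k) = Om A k := by
  unfold oneMinusSq Om
  congr 1
  · by_cases hk : k = 0 <;> simp [hk]
  · rw [sum_even_helper _ k]
    · refine Finset.sum_congr rfl fun a ha => ?_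
      have hak : a ≤ k := by exact Nat.lt_succ_iff.mp (Finset.mem_range.mp ha)
      rw [seriesOfA_even, show 2 * k - 2 * a = 2 * (k - a) from by omega, seriesOfA_even]
    · intro i hi
      rw [seriesOfA_odd A hi, zero_mul]

/-- The statement's equation at index `m`. -/
def MainEq (A : ℕ → Polynomial ℝ) (m : ℕ) : Prop :=
  ∑ i ∈ Finset.range (m + 1), sinhCoeff i • Dop^[i] (seriesOfA A (m - i))
    = ∑ j ∈ Finset.range (m + 1), epsCoeff j • oneMinusSq A (m - j)

/-- The reduced equation at odd index `2n+1`. -/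
def Eqn (A : ℕ → Polynomial ℝ) (n : ℕ) : Prop :=
  ∑ l ∈ Finset.range (n + 1), (((2 * l + 1).factorial : ℝ))⁻¹ • Dop^[2 * l + 1] (A (n - l))
    = ∑ l ∈ Finset.range (n + 1), ((4 : ℝ) ^ l / ((2 * l + 1).factorial : ℝ)) • Om A (n - l)

lemma sinhCoeff_odd (l : ℕ) : sinhCoeff (2 * l + 1) = (((2 * l + 1).factorial : ℝ))⁻¹ := by
  unfold sinhCoeff
  rw [if_pos (Nat.odd_iff.mpr (by omega))]

lemma sinhCoeff_even {i : ℕ} (h : i % 2 = 0) : sinhCoeff i = 0 := by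
  unfold sinhCoeff
  rw [if_neg]
  rw [Nat.odd_iff]
  omega

lemma epsCoeff_odd (l : ℕ) :
    epsCoeff (2 * l + 1) = (4 : ℝ) ^ l / (((2 * l + 1).factorial : ℝ)) := by
  unfold epsCoeff
  rw [if_pos (Nat.odd_iff.mpr (by omega))]
  have h2 : (2 : ℝ) ^ (2 * l + 1) = 2 * 4 ^ l := by
    rw [pow_succ, pow_mul]
    norm_num
    ring
  rw [h2]
  have hF : (((2 * l + 1).factorial : ℝ)) ≠ 0 := Nat.cast_ne_zero.mpr (Nat.factorial_ne_zero _)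
  field_simp

lemma epsCoeff_even {j : ℕ} (h : j % 2 = 0) : epsCoeff j = 0 := by
  unfold epsCoeff
  rw [if_neg]
  rw [Nat.odd_iff]
  omega

lemma mainEq_even (A : ℕ → Polynomial ℝ) (n : ℕ) : MainEq A (2 * n) := by
  unfold MainEq
  rw [Finset.sum_eq_zero, Finset.sum_eq_zero]
  · intro j hj
    rcases Nat.even_or_odd j with he | ho
    · rw [epsCoeff_even (Nat.even_iff.mp he), zero_smul]
    · have hj' : j ≤ 2 * n := Nat.lt_succ_iff.mp (Finset.mem_range.mp hj)
      have : (2 * n - j) % 2 = 1 := by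
        have := Nat.odd_iff.mp ho
        omega
      rw [oneMinusSq_odd A this, smul_zero]
  · intro i hi
    rcases Nat.even_or_odd i with he | ho
    · rw [sinhCoeff_even (Nat.even_iff.mp he), zero_smul]
    · have hi' : i ≤ 2 * n := Nat.lt_succ_iff.mp (Finset.mem_range.mp hi)
      have : (2 * n - i) % 2 = 1 := by
        have := Nat.odd_iff.mp ho
        omega
      rw [seriesOfA_odd A this, Dop_iter_zero, smul_zero]

lemma mainEq_odd_iff (A : ℕ → Polynomial ℝ) (n : ℕ) : MainEq A (2 * n + 1) ↔ Eqn A n := by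
  unfold MainEq Eqn
  have hL : ∑ i ∈ Finset.range (2 * n + 1 + 1), sinhCoeff i • Dop^[i] (seriesOfA A (2 * n + 1 - i))
      = ∑ l ∈ Finset.range (n + 1),
          (((2 * l + 1).factorial : ℝ))⁻¹ • Dop^[2 * l + 1] (A (n - l)) := by
    rw [show 2 * n + 1 + 1 = 2 * n + 2 from rfl]
    rw [sum_odd_helper _ n]
    · refine Finset.sum_congr rfl fun l hl => ?_
      have hln : l ≤ n := Nat.lt_succ_iff.mp (Finset.mem_range.mp hl)
      rw [sinhCoeff_odd, show 2 * n + 1 - (2 * l + 1) = 2 * (n - l) from by omega, seriesOfA_even]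
    · intro i hi
      rw [sinhCoeff_even hi, zero_smul]
  have hR : ∑ j ∈ Finset.range (2 * n + 1 + 1), epsCoeff j • oneMinusSq A (2 * n + 1 - j)
      = ∑ l ∈ Finset.range (n + 1),
          ((4 : ℝ) ^ l / ((2 * l + 1).factorial : ℝ)) • Om A (n - l) := by
    rw [show 2 * n + 1 + 1 = 2 * n + 2 from rfl]
    rw [sum_odd_helper _ n]
    · refine Finset.sum_congr rfl fun l hl => ?_
      have hln : l ≤ n := Nat.lt_succ_iff.mp (Finset.mem_range.mp hl)
      rw [epsCoeff_odd, show 2 * n + 1 - (2 * l + 1) = 2 * (n - l) from by omega, oneMinusSq_even]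
    · intro j hj
      rw [epsCoeff_even hj, zero_smul]
  rw [hL, hR]

lemma mainEq_iff_eqn (A : ℕ → Polynomial ℝ) : (∀ m, MainEq A m) ↔ (∀ n, Eqn A n) := by
  constructor
  · intro h n
    exact (mainEq_odd_iff A n).mp (h (2 * n + 1))
  · intro h m
    rcases Nat.even_or_odd m with he | ho
    · obtain ⟨k, hk⟩ := he
      rw [show m = 2 * k from by omega]
      exact mainEq_even A k
    · obtain ⟨k, hk⟩ := ho
      rw [hk]
      exact (mainEq_odd_iff A k).mpr (h k)

/-- Right-hand side of the recursion for `A (m+1)`. -/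
noncomputable def Rrhs (A : ℕ → Polynomial ℝ) : ℕ → Polynomial ℝ
  | 0 => 0
  | (m + 1) =>
      (∑ l ∈ Finset.range (m + 1),
        (((2 * l + 3).factorial : ℝ))⁻¹ •
          (((4 : ℝ) ^ (l + 1)) • Om A (m - l) - Dop^[2 * l + 3] (A (m - l))))
      - ∑ a ∈ Finset.range m, A (a + 1) * A (m - a)

lemma eqn_zero {A : ℕ → Polynomial ℝ} (hA0 : A 0 = X) : Eqn A 0 := by
  unfold Eqn Om
  simp [hA0, Dop]
  ring

lemma eqn_succ_iff {A : ℕ → Polynomial ℝ} (hA0 : A 0 = X) (m : ℕ) :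
    Eqn A (m + 1) ↔
      Dop (A (m + 1)) + (2 : ℝ) • (X * A (m + 1)) = Rrhs A (m + 1) := by
  unfold Eqn
  have hL : ∑ l ∈ Finset.range (m + 1 + 1),
        (((2 * l + 1).factorial : ℝ))⁻¹ • Dop^[2 * l + 1] (A (m + 1 - l))
      = (∑ l ∈ Finset.range (m + 1),
          (((2 * l + 3).factorial : ℝ))⁻¹ • Dop^[2 * l + 3] (A (m - l))) + Dop (A (m + 1)) := by
    rw [Finset.sum_range_succ']
    refine congrArg₂ (· + ·) ?_ ?_
    · refine Finset.sum_congr rfl fun l hl => ?_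
      rw [show 2 * (l + 1) + 1 = 2 * l + 3 from by ring, show m + 1 - (l + 1) = m - l from by omega]
    · simp
  have hR : ∑ l ∈ Finset.range (m + 1 + 1),
        ((4 : ℝ) ^ l / ((2 * l + 1).factorial : ℝ)) • Om A (m + 1 - l)
      = (∑ l ∈ Finset.range (m + 1),
          ((4 : ℝ) ^ (l + 1) / ((2 * l + 3).factorial : ℝ)) • Om A (m - l)) + Om A (m + 1) := by
    rw [Finset.sum_range_succ']
    refine congrArg₂ (· + ·) ?_ ?_
    · refine Finset.sum_congr rfl fun l hl => ?_
      rw [show 2 * (l + 1) + 1 = 2 * l + 3 from by ring, show m + 1 - (l + 1) = m - l from by omega]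
    · simp
  have hOm : Om A (m + 1)
      = -((2 : ℝ) • (X * A (m + 1))) - ∑ a ∈ Finset.range m, A (a + 1) * A (m - a) := by
    unfold Om
    rw [if_neg (Nat.succ_ne_zero m), Finset.sum_range_succ, Finset.sum_range_succ']
    rw [show m + 1 - (m + 1) = 0 from by omega, Nat.sub_zero]
    have hmid : ∑ a ∈ Finset.range m, A (a + 1) * A (m + 1 - (a + 1))
        = ∑ a ∈ Finset.range m, A (a + 1) * A (m - a) := by
      refine Finset.sum_congr rfl fun a ha => ?_
      rw [show m + 1 - (a + 1) = m - a from by omega]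
    rw [hmid, hA0]
    simp only [Polynomial.smul_eq_C_mul, map_ofNat]
    ring
  have hsplit : Rrhs A (m + 1)
      = ((∑ l ∈ Finset.range (m + 1),
            ((4 : ℝ) ^ (l + 1) / ((2 * l + 3).factorial : ℝ)) • Om A (m - l))
          - ∑ l ∈ Finset.range (m + 1),
            (((2 * l + 3).factorial : ℝ))⁻¹ • Dop^[2 * l + 3] (A (m - l)))
        - ∑ a ∈ Finset.range m, A (a + 1) * A (m - a) := by
    show (∑ l ∈ Finset.range (m + 1),
        (((2 * l + 3).factorial : ℝ))⁻¹ •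
          (((4 : ℝ) ^ (l + 1)) • Om A (m - l) - Dop^[2 * l + 3] (A (m - l))))
      - ∑ a ∈ Finset.range m, A (a + 1) * A (m - a) = _
    congr 1
    rw [← Finset.sum_sub_distrib]
    refine Finset.sum_congr rfl fun l hl => ?_
    rw [smul_sub, smul_smul]
    congr 2
    rw [div_eq_mul_inv, mul_comm]
  rw [hL, hR, hOm, hsplit]
  constructor
  · intro h
    simp only [Polynomial.smul_eq_C_mul, map_ofNat] at h ⊢
    linear_combination h
  · intro h
    simp only [Polynomial.smul_eq_C_mul, map_ofNat] at h ⊢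
    linear_combination h

lemma PEven_mul {p q : Polynomial ℝ} (hp : POdd p) (hq : POdd q) : PEven (p * q) := by
  unfold PEven
  rw [mul_comp, hp, hq]
  ring

lemma POdd_mul_even_odd {p q : Polynomial ℝ} (hp : PEven p) (hq : POdd q) : POdd (p * q) := by
  unfold POdd
  rw [mul_comp, hp, hq]
  ring

lemma POdd_sub {p q : Polynomial ℝ} (hp : POdd p) (hq : POdd q) : POdd (p - q) := by
  unfold POdd
  rw [sub_comp, hp, hq]
  ring

lemma PEven_one_sub_X_sq : PEven (1 - X ^ 2 : Polynomial ℝ) := one_sub_X_sq_comp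

lemma PEven_Om {A : ℕ → Polynomial ℝ} {k : ℕ} (hodd : ∀ j, j ≤ k → POdd (A j)) :
    PEven (Om A k) := by
  unfold Om PEven
  rw [sub_comp, Polynomial.sum_comp]
  congr 1
  · by_cases hk : k = 0 <;> simp [hk]
  · refine Finset.sum_congr rfl fun a ha => ?_
    have hak : a ≤ k := Nat.lt_succ_iff.mp (Finset.mem_range.mp ha)
    exact PEven_mul (hodd a hak) (hodd (k - a) (Nat.sub_le _ _))

lemma eval_Om_one {A : ℕ → Polynomial ℝ} {k : ℕ} (hA0 : A 0 = X)
    (hv : ∀ j, 1 ≤ j → j ≤ k → (A j).eval 1 = 0) : (Om A k).eval 1 = 0 := by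
  unfold Om
  rcases Nat.eq_zero_or_pos k with rfl | hk
  · simp [hA0]
  · rw [if_neg (by omega), Polynomial.eval_sub, Polynomial.eval_finset_sum]
    rw [Finset.sum_eq_zero, Polynomial.eval_zero]
    · ring
    · intro a ha
      have hak : a ≤ k := Nat.lt_succ_iff.mp (Finset.mem_range.mp ha)
      rw [Polynomial.eval_mul]
      rcases Nat.eq_zero_or_pos a with rfl | hap
      · rw [Nat.sub_zero, hv k (by omega) (by omega), mul_zero]
      · rw [hv a (by omega) hak, zero_mul]

lemma eval_Om_neg_one {A : ℕ → Polynomial ℝ} {k : ℕ} (hA0 : A 0 = X)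
    (hv : ∀ j, 1 ≤ j → j ≤ k → (A j).eval (-1) = 0) : (Om A k).eval (-1) = 0 := by
  unfold Om
  rcases Nat.eq_zero_or_pos k with rfl | hk
  · simp [hA0]
  · rw [if_neg (by omega), Polynomial.eval_sub, Polynomial.eval_finset_sum]
    rw [Finset.sum_eq_zero, Polynomial.eval_zero]
    · ring
    · intro a ha
      have hak : a ≤ k := Nat.lt_succ_iff.mp (Finset.mem_range.mp ha)
      rw [Polynomial.eval_mul]
      rcases Nat.eq_zero_or_pos a with rfl | hap
      · rw [Nat.sub_zero, hv k (by omega) (by omega), mul_zero]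
      · rw [hv a (by omega) hak, zero_mul]

lemma deriv_Om_one {A : ℕ → Polynomial ℝ} {k : ℕ} (hA0 : A 0 = X)
    (hv : ∀ j, 1 ≤ j → j ≤ k → (A j).eval 1 = 0) :
    (derivative (Om A k)).eval 1 = -2 * (derivative (A k)).eval 1 := by
  rcases k with _ | t
  · unfold Om
    simp [hA0, derivative_mul]
    norm_num
  · unfold Om
    rw [if_neg (by omega), zero_sub, derivative_neg, derivative_sum]
    simp only [derivative_mul]
    rw [Polynomial.eval_neg, Polynomial.eval_finset_sum]
    rw [Finset.sum_range_succ, Finset.sum_range_succ']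
    have hmid : ∑ a ∈ Finset.range t,
        (derivative (A (a + 1)) * A (t + 1 - (a + 1))
          + A (a + 1) * derivative (A (t + 1 - (a + 1)))).eval 1 = 0 := by
      refine Finset.sum_eq_zero fun a ha => ?_
      have ha' : a < t := Finset.mem_range.mp ha
      rw [Polynomial.eval_add, Polynomial.eval_mul, Polynomial.eval_mul]
      rw [hv (a + 1) (by omega) (by omega), hv (t + 1 - (a + 1)) (by omega) (by omega)]
      ring
    rw [hmid, Nat.sub_zero, Nat.sub_self, hA0]
    rw [Polynomial.eval_add, Polynomial.eval_add, Polynomial.eval_mul, Polynomial.eval_mul,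
      Polynomial.eval_mul, Polynomial.eval_mul]
    rw [hv (t + 1) (by omega) (by omega)]
    simp
    ring

lemma deriv_Om_neg_one {A : ℕ → Polynomial ℝ} {k : ℕ} (hA0 : A 0 = X)
    (hv : ∀ j, 1 ≤ j → j ≤ k → (A j).eval (-1) = 0) :
    (derivative (Om A k)).eval (-1) = 2 * (derivative (A k)).eval (-1) := by
  rcases k with _ | t
  · unfold Om
    simp [hA0, derivative_mul]
    norm_num
  · unfold Om
    rw [if_neg (by omega), zero_sub, derivative_neg, derivative_sum]
    simp only [derivative_mul]
    rw [Polynomial.eval_neg, Polynomial.eval_finset_sum]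
    rw [Finset.sum_range_succ, Finset.sum_range_succ']
    have hmid : ∑ a ∈ Finset.range t,
        (derivative (A (a + 1)) * A (t + 1 - (a + 1))
          + A (a + 1) * derivative (A (t + 1 - (a + 1)))).eval (-1) = 0 := by
      refine Finset.sum_eq_zero fun a ha => ?_
      have ha' : a < t := Finset.mem_range.mp ha
      rw [Polynomial.eval_add, Polynomial.eval_mul, Polynomial.eval_mul]
      rw [hv (a + 1) (by omega) (by omega), hv (t + 1 - (a + 1)) (by omega) (by omega)]
      ring
    rw [hmid, Nat.sub_zero, Nat.sub_self, hA0]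
    rw [Polynomial.eval_add, Polynomial.eval_add, Polynomial.eval_mul, Polynomial.eval_mul,
      Polynomial.eval_mul, Polynomial.eval_mul]
    rw [hv (t + 1) (by omega) (by omega)]
    simp
    ring

lemma natDegree_Om_le {A : ℕ → Polynomial ℝ} {k : ℕ}
    (hdeg : ∀ j, j ≤ k → (A j).natDegree ≤ 2 * j + 1) : (Om A k).natDegree ≤ 2 * k + 2 := by
  unfold Om
  refine le_trans (Polynomial.natDegree_sub_le _ _) ?_
  rw [max_le_iff]
  constructor
  · by_cases hk : k = 0 <;> simp [hk]
  · refine Polynomial.natDegree_sum_le_of_forall_le _ _ fun a ha => ?_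
    have hak : a ≤ k := Nat.lt_succ_iff.mp (Finset.mem_range.mp ha)
    refine le_trans (Polynomial.natDegree_mul_le) ?_
    have h1 := hdeg a hak
    have h2 := hdeg (k - a) (Nat.sub_le _ _)
    omega

section RrhsProps

variable {A : ℕ → Polynomial ℝ} {m : ℕ}

lemma PEven_Rrhs (hodd : ∀ k, k ≤ m → POdd (A k)) : PEven (Rrhs A (m + 1)) := by
  show (Rrhs A (m + 1)).comp (-X) = _
  simp only [Rrhs]
  rw [sub_comp, Polynomial.sum_comp, Polynomial.sum_comp]
  congr 1
  · refine Finset.sum_congr rfl fun l hl => ?_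
    have hlm : m - l ≤ m := Nat.sub_le _ _
    rw [smul_comp, sub_comp, smul_comp]
    rw [PEven_Om (fun j hj => hodd j (le_trans hj hlm))]
    rw [show 2 * l + 3 = 2 * (l + 1) + 1 from by ring]
    rw [PEven_Dop_iter_odd (hodd _ hlm) (l + 1)]
  · refine Finset.sum_congr rfl fun a ha => ?_
    have ha' : a < m := Finset.mem_range.mp ha
    exact PEven_mul (hodd _ (by omega)) (hodd _ (by omega))

lemma eval_Rrhs_one (hA0 : A 0 = X) (hv : ∀ j, 1 ≤ j → j ≤ m → (A j).eval 1 = 0) :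
    (Rrhs A (m + 1)).eval 1 = 0 := by
  simp only [Rrhs]
  rw [Polynomial.eval_sub, Polynomial.eval_finset_sum, Polynomial.eval_finset_sum]
  rw [Finset.sum_eq_zero, Finset.sum_eq_zero]
  · ring
  · intro a ha
    have ha' : a < m := Finset.mem_range.mp ha
    rw [Polynomial.eval_mul, hv (a + 1) (by omega) (by omega), zero_mul]
  · intro l hl
    simp only [Polynomial.smul_eq_C_mul]
    rw [Polynomial.eval_mul, Polynomial.eval_sub, Polynomial.eval_mul]
    rw [eval_Om_one hA0 (fun j h1 h2 => hv j h1 (le_trans h2 (Nat.sub_le _ _)))]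
    rw [show 2 * l + 3 = (2 * l + 2) + 1 from by ring, eval_Dop_iter_one]
    simp

lemma eval_Rrhs_neg_one (hA0 : A 0 = X) (hv : ∀ j, 1 ≤ j → j ≤ m → (A j).eval (-1) = 0) :
    (Rrhs A (m + 1)).eval (-1) = 0 := by
  simp only [Rrhs]
  rw [Polynomial.eval_sub, Polynomial.eval_finset_sum, Polynomial.eval_finset_sum]
  rw [Finset.sum_eq_zero, Finset.sum_eq_zero]
  · ring
  · intro a ha
    have ha' : a < m := Finset.mem_range.mp ha
    rw [Polynomial.eval_mul, hv (a + 1) (by omega) (by omega), zero_mul]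
  · intro l hl
    simp only [Polynomial.smul_eq_C_mul]
    rw [Polynomial.eval_mul, Polynomial.eval_sub, Polynomial.eval_mul]
    rw [eval_Om_neg_one hA0 (fun j h1 h2 => hv j h1 (le_trans h2 (Nat.sub_le _ _)))]
    rw [show 2 * l + 3 = (2 * l + 2) + 1 from by ring, eval_Dop_iter_neg_one]
    simp

lemma deriv_Rrhs_one (hA0 : A 0 = X) (hv : ∀ j, 1 ≤ j → j ≤ m → (A j).eval 1 = 0) :
    (derivative (Rrhs A (m + 1))).eval 1 = 0 := by
  simp only [Rrhs]
  rw [derivative_sub, derivative_sum, derivative_sum]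
  rw [Polynomial.eval_sub, Polynomial.eval_finset_sum, Polynomial.eval_finset_sum]
  rw [Finset.sum_eq_zero, Finset.sum_eq_zero]
  · ring
  · intro a ha
    have ha' : a < m := Finset.mem_range.mp ha
    rw [derivative_mul, Polynomial.eval_add, Polynomial.eval_mul, Polynomial.eval_mul]
    rw [hv (a + 1) (by omega) (by omega), hv (m - a) (by omega) (by omega)]
    ring
  · intro l hl
    rw [derivative_smul, derivative_sub, derivative_smul]
    simp only [Polynomial.smul_eq_C_mul, Polynomial.eval_mul, Polynomial.eval_sub,
      Polynomial.eval_C]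
    rw [deriv_Om_one hA0 (fun j h1 h2 => hv j h1 (le_trans h2 (Nat.sub_le _ _)))]
    rw [deriv_Dop_iter_eval_one]
    have hodd23 : Odd (2 * l + 3) := ⟨l + 1, by ring⟩
    rw [hodd23.neg_pow]
    rw [show (2:ℝ) ^ (2 * l + 3) = 4 ^ (l + 1) * 2 from by
      rw [show 2 * l + 3 = 2 * (l + 1) + 1 from by ring, pow_succ, pow_mul]
      norm_num]
    ring

lemma deriv_Rrhs_neg_one (hA0 : A 0 = X) (hv : ∀ j, 1 ≤ j → j ≤ m → (A j).eval (-1) = 0) :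
    (derivative (Rrhs A (m + 1))).eval (-1) = 0 := by
  simp only [Rrhs]
  rw [derivative_sub, derivative_sum, derivative_sum]
  rw [Polynomial.eval_sub, Polynomial.eval_finset_sum, Polynomial.eval_finset_sum]
  rw [Finset.sum_eq_zero, Finset.sum_eq_zero]
  · ring
  · intro a ha
    have ha' : a < m := Finset.mem_range.mp ha
    rw [derivative_mul, Polynomial.eval_add, Polynomial.eval_mul, Polynomial.eval_mul]
    rw [hv (a + 1) (by omega) (by omega), hv (m - a) (by omega) (by omega)]
    ring
  · intro l hl
    rw [derivative_smul, derivative_sub, derivative_smul]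
    simp only [Polynomial.smul_eq_C_mul, Polynomial.eval_mul, Polynomial.eval_sub,
      Polynomial.eval_C]
    rw [deriv_Om_neg_one hA0 (fun j h1 h2 => hv j h1 (le_trans h2 (Nat.sub_le _ _)))]
    rw [deriv_Dop_iter_eval_neg_one]
    rw [show (2:ℝ) ^ (2 * l + 3) = 4 ^ (l + 1) * 2 from by
      rw [show 2 * l + 3 = 2 * (l + 1) + 1 from by ring, pow_succ, pow_mul]
      norm_num]
    ring

lemma natDegree_Rrhs_le (hdeg : ∀ k, k ≤ m → (A k).natDegree ≤ 2 * k + 1) :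
    (Rrhs A (m + 1)).natDegree ≤ 2 * m + 4 := by
  simp only [Rrhs]
  refine le_trans (Polynomial.natDegree_sub_le _ _) ?_
  rw [max_le_iff]
  constructor
  · refine Polynomial.natDegree_sum_le_of_forall_le _ _ fun l hl => ?_
    refine le_trans (Polynomial.natDegree_smul_le _ _) ?_
    refine le_trans (Polynomial.natDegree_sub_le _ _) ?_
    rw [max_le_iff]
    constructor
    · refine le_trans (Polynomial.natDegree_smul_le _ _) ?_
      have := natDegree_Om_le (A := A) (k := m - l) (fun j hj => hdeg j (le_trans hj (Nat.sub_le _ _)))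
      omega
    · have hlm : l ≤ m := Nat.lt_succ_iff.mp (Finset.mem_range.mp hl)
      have h1 := natDegree_Dop_iter_le (A (m - l)) (2 * l + 3)
      have h2 := hdeg (m - l) (Nat.sub_le _ _)
      omega
  · refine Polynomial.natDegree_sum_le_of_forall_le _ _ fun a ha => ?_
    have ha' : a < m := Finset.mem_range.mp ha
    refine le_trans (Polynomial.natDegree_mul_le) ?_
    have h1 := hdeg (a + 1) (by omega)
    have h2 := hdeg (m - a) (by omega)
    omega

lemma Om_congr {A B : ℕ → Polynomial ℝ} {k : ℕ} (h : ∀ j, j ≤ k → A j = B j) :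
    Om A k = Om B k := by
  unfold Om
  congr 1
  refine Finset.sum_congr rfl fun a ha => ?_
  have hak : a ≤ k := Nat.lt_succ_iff.mp (Finset.mem_range.mp ha)
  rw [h a hak, h (k - a) (Nat.sub_le _ _)]

lemma Rrhs_congr {A B : ℕ → Polynomial ℝ} {n : ℕ} (h : ∀ k, k < n → A k = B k) :
    Rrhs A n = Rrhs B n := by
  rcases n with _ | m
  · rfl
  · simp only [Rrhs]
    refine congrArg₂ (· - ·) ?_ ?_
    · refine Finset.sum_congr rfl fun l hl => ?_
      have hlm : m - l ≤ m := Nat.sub_le _ _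
      rw [Om_congr (fun j hj => h j (by omega)), h (m - l) (by omega)]
    · refine Finset.sum_congr rfl fun a ha => ?_
      have ha' : a < m := Finset.mem_range.mp ha
      rw [h (a + 1) (by omega), h (m - a) (by omega)]

end RrhsProps

/-- One construction step. -/
noncomputable def nextA (A : ℕ → Polynomial ℝ) (n : ℕ) : Polynomial ℝ :=
  (1 - X ^ 2) * intPoly (Rrhs A n /ₘ ((X ^ 2 - 1) ^ 2))

/-- Truncated solutions. -/
noncomputable def Atr : ℕ → ℕ → Polynomial ℝ
  | 0 => fun _ => X
  | (N + 1) => fun k => if k = N + 1 then nextA (Atr N) (N + 1) else Atr N k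

/-- The formal solution. -/
noncomputable def Asol (n : ℕ) : Polynomial ℝ := Atr n n

lemma Asol_zero : Asol 0 = X := rfl

lemma Atr_stable : ∀ N k, k ≤ N → Atr N k = Asol k := by
  intro N
  induction N with
  | zero =>
      intro k hk
      interval_cases k
      rfl
  | succ N ihN =>
      intro k hk
      rcases Nat.eq_or_lt_of_le hk with rfl | hlt
      · rfl
      · have hkN : k ≤ N := by omega
        have h1 : Atr (N + 1) k = Atr N k := by
          simp only [Atr]
          rw [if_neg (by omega)]
        rw [h1, ihN k hkN]

lemma Asol_succ (n : ℕ) : Asol (n + 1) = nextA Asol (n + 1) := by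
  show Atr (n + 1) (n + 1) = _
  have h1 : Atr (n + 1) (n + 1) = nextA (Atr n) (n + 1) := by
    simp [Atr]
  rw [h1]
  unfold nextA
  rw [Rrhs_congr (fun k hk => Atr_stable n k (by omega))]

lemma natDegree_quad_sq : ((X ^ 2 - 1 : Polynomial ℝ) ^ 2).natDegree = 4 := by
  rw [Polynomial.natDegree_pow, show (X ^ 2 - 1 : Polynomial ℝ) = X ^ 2 - C 1 from by rw [C_1],
    Polynomial.natDegree_X_pow_sub_C]

theorem Asol_good (n : ℕ) : POdd (Asol n) ∧ (Asol n).natDegree ≤ 2 * n + 1 ∧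
    (1 ≤ n → (Asol n).eval 1 = 0 ∧ (Asol n).eval (-1) = 0) ∧ Eqn Asol n := by
  induction n using Nat.strong_induction_on with
  | _ n ih =>
    rcases n with _ | m
    · refine ⟨POdd.X, by rw [Asol_zero]; simp, fun h => absurd h (by omega), eqn_zero Asol_zero⟩
    · have hodd : ∀ k, k ≤ m → POdd (Asol k) := fun k hk => (ih k (by omega)).1
      have hdeg : ∀ k, k ≤ m → (Asol k).natDegree ≤ 2 * k + 1 := fun k hk => (ih k (by omega)).2.1
      have hv1 : ∀ j, 1 ≤ j → j ≤ m → (Asol j).eval 1 = 0 :=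
        fun j h1 h2 => ((ih j (by omega)).2.2.1 h1).1
      have hv2 : ∀ j, 1 ≤ j → j ≤ m → (Asol j).eval (-1) = 0 :=
        fun j h1 h2 => ((ih j (by omega)).2.2.1 h1).2
      obtain ⟨S, hS⟩ := quad_sq_factor (eval_Rrhs_one Asol_zero hv1)
        (deriv_Rrhs_one Asol_zero hv1) (eval_Rrhs_neg_one Asol_zero hv2)
        (deriv_Rrhs_neg_one Asol_zero hv2)
      have hq0 : ((X ^ 2 - 1 : Polynomial ℝ) ^ 2) ≠ 0 := monic_quad_sq.ne_zero
      have hdiv : Rrhs Asol (m + 1) /ₘ ((X ^ 2 - 1) ^ 2) = S := by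
        rw [hS]
        exact Polynomial.mul_divByMonic_cancel_left S monic_quad_sq
      have hAeq : Asol (m + 1) = (1 - X ^ 2) * intPoly S := by
        rw [Asol_succ]
        unfold nextA
        rw [hdiv]
      have hSeven : PEven S := by
        have hRe : (Rrhs Asol (m + 1)).comp (-X) = Rrhs Asol (m + 1) := PEven_Rrhs hodd
        have hqc : ((X ^ 2 - 1 : Polynomial ℝ) ^ 2).comp (-X) = (X ^ 2 - 1) ^ 2 := by
          rw [pow_comp, sub_comp, pow_comp, X_comp, one_comp]
          ring
        rw [hS, mul_comp, hqc] at hRe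
        exact mul_left_cancel₀ hq0 hRe
      have hSdeg : S.natDegree ≤ 2 * m := by
        by_cases hS0 : S = 0
        · simp [hS0]
        · have hRd : (Rrhs Asol (m + 1)).natDegree = 4 + S.natDegree := by
            rw [hS, Polynomial.natDegree_mul hq0 hS0, natDegree_quad_sq]
          have hR4 := natDegree_Rrhs_le hdeg
          omega
      have hIdeg : (intPoly S).natDegree ≤ 2 * m + 1 := by
        have := natDegree_intPoly_le S
        omega
      refine ⟨?_, ?_, ?_, ?_⟩
      · rw [hAeq]
        exact POdd_mul_even_odd PEven_one_sub_X_sq (intPoly_odd hSeven)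
      · rw [hAeq]
        refine le_trans (Polynomial.natDegree_mul_le) ?_
        have h1 : (1 - X ^ 2 : Polynomial ℝ).natDegree ≤ 2 := by
          refine le_trans (Polynomial.natDegree_sub_le _ _) ?_
          simp
        omega
      · intro _
        constructor <;> (rw [hAeq]; simp)
      · refine (eqn_succ_iff Asol_zero m).mpr ?_
        rw [hAeq, L_eq, derivative_intPoly, ← hS]

theorem exists_unique_formal_solution : ∃! A : ℕ → Polynomial ℝ, IsFormalSolution A := by
  refine ⟨Asol, ⟨Asol_zero, ?_, ?_, ?_, ?_⟩, ?_⟩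
  · intro n
    exact Polynomial.natDegree_le_iff_degree_le.mp (Asol_good n).2.1
  · intro n x
    exact podd_iff_eval.mp (Asol_good n).1 x
  · intro n hn
    exact (Asol_good n).2.2.1 hn
  · exact (mainEq_iff_eqn Asol).mpr (fun n => (Asol_good n).2.2.2)
  · intro B hB
    obtain ⟨hB0, hBdeg, hBodd, hBv, hBeq⟩ := hB
    have hBE : ∀ n, Eqn B n := (mainEq_iff_eqn B).mp hBeq
    have key : ∀ n, B n = Asol n := by
      intro n
      induction n using Nat.strong_induction_on with
      | _ n ih =>
        rcases n with _ | m
        · rw [hB0, Asol_zero]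
        · have h1 : Dop (B (m + 1)) + (2 : ℝ) • (X * B (m + 1)) = Rrhs B (m + 1) :=
            (eqn_succ_iff hB0 m).mp (hBE (m + 1))
          have h2 : Dop (Asol (m + 1)) + (2 : ℝ) • (X * Asol (m + 1)) = Rrhs Asol (m + 1) :=
            (eqn_succ_iff Asol_zero m).mp (Asol_good (m + 1)).2.2.2
          have hRR : Rrhs B (m + 1) = Rrhs Asol (m + 1) := Rrhs_congr (fun k hk => ih k hk)
          have hdiff : Dop (B (m + 1) - Asol (m + 1))
              + (2 : ℝ) • (X * (B (m + 1) - Asol (m + 1))) = 0 := by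
            have hDsub : Dop (B (m + 1) - Asol (m + 1))
                = Dop (B (m + 1)) - Dop (Asol (m + 1)) := by
              unfold Dop
              rw [derivative_sub, mul_sub]
            rw [hDsub]
            rw [hRR] at h1
            simp only [Polynomial.smul_eq_C_mul] at h1 h2 ⊢
            linear_combination h1 - h2
          have hpodd : POdd (B (m + 1) - Asol (m + 1)) :=
            POdd_sub (podd_iff_eval.mpr (hBodd (m + 1))) (Asol_good (m + 1)).1
          exact sub_eq_zero.mp (L_inj_odd hpodd hdiff)
    exact funext key

end S5

theorem stmt_5 : ∃! A : ℕ → Polynomial ℝ, IsFormalSolution A :=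
  S5.exists_unique_formal_solution
end

section
/- Let K > 0 and let (e_n)_{n≥7} be a sequence of nonnegative real numbers. For n ≥ 7 set e⁺_n = max{e_j : 7 ≤ j ≤ n}; for n ≥ 18 set f_n = Σ_{i=9}^{n−9} e⁺_i·e⁺_{n−i}·(i−1)!·(n−i−1)!/(n−10)! and f⁺_n = max{f_j : 18 ≤ j ≤ n}. If e_{n−1} ≤ (K/n)·(1 + e⁺_{n−3} + f⁺_{n+2}) for all n ≥ 16, then e_n = O(1/n) as n → ∞, i.e. sup_{n≥7} n·e_n < ∞. -/
noncomputable def vv (M : ℝ) (n : ℕ) : ℝ := if n ≤ 13 then 1 else max 1 (M / n)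
noncomputable def ss (M : ℝ) (n : ℕ) : ℝ := Real.sqrt (vv M n)
noncomputable def gg (M : ℝ) (n : ℕ) : ℝ := ∏ t ∈ Finset.Ioc 13 n, ss M t
noncomputable def uu (M : ℝ) (n : ℕ) : ℝ := ((n : ℝ) - 1) * ss M n

lemma one_le_vv (M : ℝ) (n : ℕ) : 1 ≤ vv M n := by
  unfold vv; split
  · exact le_refl 1
  · exact le_max_left _ _

lemma one_le_ss (M : ℝ) (n : ℕ) : 1 ≤ ss M n := by
  unfold ss
  rw [show (1:ℝ) = Real.sqrt 1 by simp]
  exact Real.sqrt_le_sqrt (one_le_vv M n)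

lemma ss_sq (M : ℝ) (n : ℕ) : ss M n ^ 2 = vv M n := by
  unfold ss
  rw [Real.sq_sqrt]
  exact le_trans zero_le_one (one_le_vv M n)

lemma ss_pos (M : ℝ) (n : ℕ) : 0 < ss M n := lt_of_lt_of_le one_pos (one_le_ss M n)

lemma gg_succ (M : ℝ) (n : ℕ) : gg M (n + 1) = gg M n * ss M (n + 1) := by
  unfold gg
  by_cases h : 13 ≤ n
  · rw [Finset.prod_Ioc_succ_top (by omega)]
  · have h1 : n + 1 ≤ 13 := by omega
    rw [Finset.Ioc_eq_empty (by omega), Finset.Ioc_eq_empty (by omega)]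
    simp only [Finset.prod_empty, one_mul]
    have : ss M (n+1) = 1 := by
      unfold ss vv
      rw [if_pos h1, Real.sqrt_one]
    rw [this]

lemma one_le_gg (M : ℝ) (n : ℕ) : 1 ≤ gg M n := by
  unfold gg
  have := Finset.prod_le_prod (s := Finset.Ioc 13 n) (f := fun _ => (1:ℝ)) (g := fun t => ss M t)
    (fun _ _ => zero_le_one) (fun t _ => one_le_ss M t)
  simpa using this

lemma gg_pos (M : ℝ) (n : ℕ) : 0 < gg M n := lt_of_lt_of_le one_pos (one_le_gg M n)

lemma gg_mono (M : ℝ) {a b : ℕ} (h : a ≤ b) : gg M a ≤ gg M b := by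
  rcases le_or_gt a 13 with h13 | h13
  · have : gg M a = 1 := by
      unfold gg; rw [Finset.Ioc_eq_empty (by omega)]; exact Finset.prod_empty
    rw [this]; exact one_le_gg M b
  · have hsplit : gg M a * (∏ t ∈ Finset.Ioc a b, ss M t) = gg M b := by
      unfold gg; exact Finset.prod_Ioc_consecutive _ (by omega) h
    rw [← hsplit]
    have h1 : (1:ℝ) ≤ ∏ t ∈ Finset.Ioc a b, ss M t := by
      have := Finset.prod_le_prod (s := Finset.Ioc a b) (f := fun _ => (1:ℝ))
        (g := fun t => ss M t) (fun _ _ => zero_le_one) (fun t _ => one_le_ss M t)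
      simpa using this
    nlinarith [gg_pos M a]



lemma vv_pos (M : ℝ) (n : ℕ) : 0 < vv M n := lt_of_lt_of_le one_pos (one_le_vv M n)

lemma nvv_mono (M : ℝ) {p q : ℕ} (hp : 1 ≤ p) (hpq : p ≤ q) :
    (p : ℝ) * vv M p ≤ (q : ℝ) * vv M q := by
  have hq : 1 ≤ q := le_trans hp hpq
  have hp0 : (0:ℝ) < p := by exact_mod_cast hp
  have hq0 : (0:ℝ) < q := by exact_mod_cast hq
  have hpq' : (p:ℝ) ≤ q := by exact_mod_cast hpq
  by_cases hp13 : p ≤ 13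
  · have hvp : vv M p = 1 := by unfold vv; rw [if_pos hp13]
    rw [hvp, mul_one]
    calc (p:ℝ) ≤ q := hpq'
      _ = q * 1 := (mul_one _).symm
      _ ≤ q * vv M q := by
          apply mul_le_mul_of_nonneg_left (one_le_vv M q) hq0.le
  · have hq13 : ¬ q ≤ 13 := by omega
    have hvp : vv M p = max 1 (M / p) := by unfold vv; rw [if_neg hp13]
    have hvq : vv M q = max 1 (M / q) := by unfold vv; rw [if_neg hq13]
    rcases le_or_gt (M / p) 1 with hle | hgt
    · rw [hvp, max_eq_left hle, mul_one]
      calc (p:ℝ) ≤ q := hpq'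
        _ = q * 1 := (mul_one _).symm
        _ ≤ q * vv M q := mul_le_mul_of_nonneg_left (one_le_vv M q) hq0.le
    · rw [hvp, max_eq_right (le_of_lt hgt), hvq]
      have h1 : (p:ℝ) * (M / p) = M := by field_simp
      rw [h1]
      have h2 : M ≤ (q:ℝ) * (M/q) := by
        rw [mul_div_cancel₀]; exact hq0.ne'
      exact le_trans h2 (mul_le_mul_of_nonneg_left (le_max_right _ _) hq0.le)

lemma w_mono (M : ℝ) {p q : ℕ} (hp : 1 ≤ p) (hpq : p ≤ q) :
    ((p:ℝ) - 1)^2 * vv M p ≤ ((q:ℝ) - 1)^2 * vv M q := by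
  have hq : 1 ≤ q := le_trans hp hpq
  have hp0 : (1:ℝ) ≤ p := by exact_mod_cast hp
  have hq0 : (1:ℝ) ≤ q := by exact_mod_cast hq
  have hpq' : (p:ℝ) ≤ q := by exact_mod_cast hpq
  have h1 := nvv_mono M hp hpq
  have hvvp := one_le_vv M p
  have hvvq := one_le_vv M q
  have hppos : (0:ℝ) < p := by linarith
  have hqpos : (0:ℝ) < q := by linarith
  have hpoly : (q:ℝ) * ((p:ℝ)-1)^2 ≤ (p:ℝ) * ((q:ℝ)-1)^2 := by
    nlinarith [mul_nonneg (sub_nonneg.mpr hpq') (sub_nonneg.mpr hp0),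
      mul_nonneg (mul_nonneg (sub_nonneg.mpr hpq') (sub_nonneg.mpr hp0)) hppos.le]
  have hchain : (p:ℝ) * q * (((p:ℝ)-1)^2 * vv M p) ≤ (p:ℝ) * q * (((q:ℝ)-1)^2 * vv M q) := by
    have t1 : ((p:ℝ)-1)^2 * ((p:ℝ) * vv M p) ≤ ((p:ℝ)-1)^2 * ((q:ℝ) * vv M q) :=
      mul_le_mul_of_nonneg_left h1 (sq_nonneg _)
    have t2 : ((q:ℝ) * vv M q) * ((q:ℝ) * ((p:ℝ)-1)^2) ≤ ((q:ℝ) * vv M q) * ((p:ℝ) * ((q:ℝ)-1)^2) :=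
      mul_le_mul_of_nonneg_left hpoly (by positivity)
    nlinarith [t1, t2]
  exact le_of_mul_le_mul_left (by linarith [hchain]) (by positivity : (0:ℝ) < (p:ℝ) * q)

lemma w_double (M : ℝ) {p q : ℕ} (hp : 10 ≤ p) (hpq : 2*p ≤ q) :
    25 * (((p:ℝ) - 1)^2 * vv M p) ≤ 16 * (((q:ℝ) - 1)^2 * vv M q) := by
  have hp1 : 1 ≤ p := by omega
  have hq : p ≤ q := by omega
  have h1 := nvv_mono M hp1 hq
  have hp0 : (10:ℝ) ≤ p := by exact_mod_cast hp
  have h2q : 2*(p:ℝ) ≤ q := by exact_mod_cast hpq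
  have hppos : (0:ℝ) < p := by linarith
  have hqpos : (0:ℝ) < q := by linarith
  have hvvq := one_le_vv M q
  have hpoly : 25 * ((q:ℝ) * ((p:ℝ)-1)^2) ≤ 16 * ((p:ℝ) * ((q:ℝ)-1)^2) := by
    nlinarith [mul_nonneg (sub_nonneg.mpr h2q) hppos.le,
      mul_nonneg (mul_nonneg (sub_nonneg.mpr h2q) hppos.le) hppos.le,
      sq_nonneg ((q:ℝ) - 2*p), mul_nonneg (sub_nonneg.mpr h2q) (sub_nonneg.mpr h2q)]
  have hchain : (p:ℝ) * q * (25 * (((p:ℝ)-1)^2 * vv M p)) ≤ (p:ℝ) * q * (16 * (((q:ℝ)-1)^2 * vv M q)) := by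
    have t1 : 25 * ((q:ℝ) * ((p:ℝ)-1)^2) * ((p:ℝ) * vv M p) ≤ 25 * ((q:ℝ) * ((p:ℝ)-1)^2) * ((q:ℝ) * vv M q) :=
      mul_le_mul_of_nonneg_left h1 (by positivity)
    have t2 : ((q:ℝ) * vv M q) * (25 * ((q:ℝ) * ((p:ℝ)-1)^2)) ≤ ((q:ℝ) * vv M q) * (16 * ((p:ℝ) * ((q:ℝ)-1)^2)) :=
      mul_le_mul_of_nonneg_left hpoly (by positivity)
    nlinarith [t1, t2]
  exact le_of_mul_le_mul_left (by linarith [hchain]) (by positivity : (0:ℝ) < (p:ℝ) * q)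

lemma uu_eq_sqrt (M : ℝ) {n : ℕ} (hn : 1 ≤ n) :
    uu M n = Real.sqrt (((n:ℝ) - 1)^2 * vv M n) := by
  have h1 : (0:ℝ) ≤ (n:ℝ) - 1 := by
    have : (1:ℝ) ≤ n := by exact_mod_cast hn
    linarith
  unfold uu ss
  rw [Real.sqrt_mul (sq_nonneg _), Real.sqrt_sq h1]

lemma uu_mono (M : ℝ) {p q : ℕ} (hp : 1 ≤ p) (hpq : p ≤ q) : uu M p ≤ uu M q := by
  rw [uu_eq_sqrt M hp, uu_eq_sqrt M (le_trans hp hpq)]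
  exact Real.sqrt_le_sqrt (w_mono M hp hpq)

lemma uu_double (M : ℝ) {p q : ℕ} (hp : 10 ≤ p) (hpq : 2*p ≤ q) :
    5 * uu M p ≤ 4 * uu M q := by
  rw [uu_eq_sqrt M (by omega), uu_eq_sqrt M (by omega)]
  have h5 : (5:ℝ) = Real.sqrt 25 := by
    rw [show (25:ℝ) = 5^2 by norm_num, Real.sqrt_sq (by norm_num)]
  have h4 : (4:ℝ) = Real.sqrt 16 := by
    rw [show (16:ℝ) = 4^2 by norm_num, Real.sqrt_sq (by norm_num)]
  rw [h5, h4, ← Real.sqrt_mul (by norm_num), ← Real.sqrt_mul (by norm_num)]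
  exact Real.sqrt_le_sqrt (w_double M hp hpq)

lemma uu_pos (M : ℝ) {n : ℕ} (hn : 2 ≤ n) : 0 < uu M n := by
  unfold uu
  have h1 : (0:ℝ) < (n:ℝ) - 1 := by
    have : (2:ℝ) ≤ n := by exact_mod_cast hn
    linarith
  have h2 : (0:ℝ) < ss M n := lt_of_lt_of_le one_pos (by
    unfold ss
    rw [show (1:ℝ) = Real.sqrt 1 by simp]
    exact Real.sqrt_le_sqrt (one_le_vv M n))
  positivity


noncomputable def rker (M : ℝ) (j i : ℕ) : ℝ :=
  gg M i * gg M (j - i) * (Nat.factorial (i - 1) : ℝ) * (Nat.factorial (j - i - 1) : ℝ) /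
    (Nat.factorial (j - 10) : ℝ)


lemma gg_nine (M : ℝ) : gg M 9 = 1 := by
  unfold gg; rw [Finset.Ioc_eq_empty (by omega)]; exact Finset.prod_empty

lemma rker_nonneg (M : ℝ) (j i : ℕ) : 0 ≤ rker M j i := by
  unfold rker
  have h1 := gg_pos M i
  have h2 := gg_pos M (j - i)
  have h3 : (0:ℝ) < (Nat.factorial (i-1) : ℝ) := by exact_mod_cast Nat.factorial_pos _
  have h4 : (0:ℝ) < (Nat.factorial (j-i-1) : ℝ) := by exact_mod_cast Nat.factorial_pos _
  have h5 : (0:ℝ) < (Nat.factorial (j-10) : ℝ) := by exact_mod_cast Nat.factorial_pos _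
  positivity

lemma fact_cast_succ {a : ℕ} (ha : 1 ≤ a) :
    (Nat.factorial a : ℝ) = (a : ℝ) * (Nat.factorial (a - 1) : ℝ) := by
  have h : a = (a - 1) + 1 := by omega
  rw [← Nat.cast_mul]
  congr 1
  calc Nat.factorial a = Nat.factorial ((a-1)+1) := by rw [← h]
    _ = ((a-1)+1) * Nat.factorial (a-1) := Nat.factorial_succ _
    _ = a * Nat.factorial (a-1) := by rw [← h]

lemma rker_step (M : ℝ) {j a : ℕ} (hj : 18 ≤ j) (ha : 9 ≤ a) (h2 : 2*(a+1) ≤ j+1) :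
    rker M j (a+1) * uu M (j - a) = rker M j a * uu M (a+1) := by
  have e1 : j - (a+1) = j - a - 1 := by omega
  have e2 : (a+1) - 1 = a := by omega
  have e3 : j - a - 1 - 1 = j - a - 2 := by omega
  have hja : (j - a - 1) + 1 = j - a := by omega
  unfold rker uu
  rw [e1, e2, e3]
  have hga : gg M (a+1) = gg M a * ss M (a+1) := gg_succ M a
  have hgj : gg M (j - a) = gg M (j - a - 1) * ss M (j - a) := by
    conv_lhs => rw [← hja]
    rw [gg_succ, hja]
  have hfa : (Nat.factorial a : ℝ) = (a : ℝ) * (Nat.factorial (a-1) : ℝ) :=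
    fact_cast_succ (by omega)
  have hfj : (Nat.factorial (j - a - 1) : ℝ)
      = ((j - a - 1 : ℕ) : ℝ) * (Nat.factorial (j - a - 2) : ℝ) := by
    have := fact_cast_succ (a := j - a - 1) (by omega)
    rw [show j - a - 1 - 1 = j - a - 2 by omega] at this
    exact this
  have hc1 : ((j - a : ℕ) : ℝ) - 1 = ((j - a - 1 : ℕ) : ℝ) := by
    have h1 : 1 ≤ j - a := by omega
    push_cast [Nat.cast_sub h1]
    ring
  have hc2 : ((a+1 : ℕ) : ℝ) - 1 = (a : ℝ) := by push_cast; ring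
  rw [hga, hgj, hfa, hfj, hc1, hc2]
  ring

lemma rker_sym (M : ℝ) {j i : ℕ} (hi : 9 ≤ i) (hij : i ≤ j - 9) (hj : 18 ≤ j) :
    rker M j i = rker M j (j - i) := by
  unfold rker
  have h1 : j - (j - i) = i := by omega
  rw [h1]
  ring

lemma rker_base (M : ℝ) {j : ℕ} (hj : 18 ≤ j) :
    rker M j 9 = 40320 * gg M (j - 9) := by
  unfold rker
  have h1 : (9:ℕ) - 1 = 8 := by omega
  have h2 : j - 9 - 1 = j - 10 := by omega
  rw [h1, h2, gg_nine]
  have h3 : (Nat.factorial (j-10) : ℝ) ≠ 0 := by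
    exact_mod_cast (Nat.factorial_pos _).ne'
  have h4 : (Nat.factorial 8 : ℝ) = 40320 := by norm_num [Nat.factorial]
  field_simp [h4]
  ring

lemma rker_chain (M : ℝ) {j : ℕ} (hj : 18 ≤ j) :
    ∀ a, 9 ≤ a → 2*a ≤ j+1 →
      rker M j a ≤ 40320 * gg M (j - 9) * (4/5 : ℝ)^(min a ((j+1)/3) - 9) := by
  intro a ha
  induction a, ha using Nat.le_induction with
  | base =>
    intro _
    have hmin : min 9 ((j+1)/3) - 9 = 0 := by omega
    rw [hmin, pow_zero, mul_one, rker_base M hj]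
  | succ a ha IH =>
    intro h2
    have h2a : 2*a ≤ j+1 := by omega
    have hIH := IH h2a
    have hid := rker_step M hj ha h2
    have hupos : 0 < uu M (j - a) := uu_pos M (by omega)
    have hrnn := rker_nonneg M j a
    have heq : rker M j (a+1) = rker M j a * uu M (a+1) / uu M (j - a) := by
      field_simp
      linarith [hid]
    rcases le_or_gt (a+1) ((j+1)/3) with hD | hD
    · -- geometric decay step
      have hq : 2*(a+1) ≤ j - a := by omega
      have hdbl := uu_double M (p := a+1) (q := j - a) (by omega) hq
      have hle : rker M j (a+1) ≤ (4/5) * rker M j a := by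
        rw [heq, div_le_iff₀ hupos]
        have huann : 0 ≤ uu M (a+1) := le_of_lt (uu_pos M (by omega))
        nlinarith [hdbl, hrnn, mul_le_mul_of_nonneg_left hdbl hrnn]
      have hmin1 : min (a+1) ((j+1)/3) - 9 = (min a ((j+1)/3) - 9) + 1 := by omega
      rw [hmin1, pow_succ]
      calc rker M j (a+1) ≤ (4/5) * rker M j a := hle
        _ ≤ (4/5) * (40320 * gg M (j-9) * (4/5:ℝ)^(min a ((j+1)/3) - 9)) := by
            apply mul_le_mul_of_nonneg_left hIH (by norm_num)
        _ = 40320 * gg M (j-9) * ((4/5:ℝ)^(min a ((j+1)/3) - 9) * (4/5)) := by ring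
    · -- monotone step
      have hmono := uu_mono M (p := a+1) (q := j - a) (by omega) (by omega)
      have hle : rker M j (a+1) ≤ rker M j a := by
        rw [heq, div_le_iff₀ hupos]
        nlinarith [hmono, hrnn]
      have hmin2 : min (a+1) ((j+1)/3) = min a ((j+1)/3) := by omega
      rw [hmin2]
      exact le_trans hle hIH

lemma lemJ {j : ℕ} (hj : 18 ≤ j) :
    ((j:ℝ)+1) * (4/5 : ℝ)^((j+1)/3 - 9) ≤ 30 := by
  set D := (j+1)/3 with hD
  rcases le_or_gt D 9 with h9 | h9
  · have hm : D - 9 = 0 := by omega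
    rw [hm, pow_zero, mul_one]
    have : j + 1 ≤ 29 := by omega
    have : ((j:ℝ)+1) ≤ 29 := by exact_mod_cast this
    linarith
  · set m := D - 9 with hm
    have hm1 : 1 ≤ m := by omega
    have hj3 : j + 1 ≤ 3*m + 29 := by omega
    have hj3' : ((j:ℝ)+1) ≤ 3*(m:ℝ) + 29 := by exact_mod_cast hj3
    have hBer : 1 + (m:ℝ) * (1/4) ≤ (1 + 1/4)^m := by
      apply one_add_mul_le_pow
      norm_num
    have h54 : ((5:ℝ)/4)^m = (1 + 1/4)^m := by norm_num
    have hpow : (4/5 : ℝ)^m ≤ 4 / ((m:ℝ) + 4) := by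
      have h1 : (4/5 : ℝ)^m = (((5:ℝ)/4)^m)⁻¹ := by
        rw [← inv_pow]; norm_num
      rw [h1]
      have h2 : (0:ℝ) < 1 + (m:ℝ)*(1/4) := by positivity
      have h3 : (0:ℝ) < ((5:ℝ)/4)^m := by positivity
      have h4 : (((5:ℝ)/4)^m)⁻¹ ≤ (1 + (m:ℝ)*(1/4))⁻¹ := by
        apply inv_anti₀ h2
        rw [h54]; exact hBer
      apply le_trans h4
      rw [inv_eq_one_div]
      rw [div_le_div_iff₀ h2 (by positivity)]
      ring_nf
      linarith
    have hmnn : (0:ℝ) ≤ (m:ℝ) := Nat.cast_nonneg m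
    calc ((j:ℝ)+1) * (4/5:ℝ)^m ≤ (3*(m:ℝ)+29) * (4 / ((m:ℝ)+4)) := by
          apply mul_le_mul hj3' hpow (by positivity) (by linarith)
      _ ≤ 30 := by
          rw [mul_div_assoc', div_le_iff₀ (by positivity : (0:ℝ) < (m:ℝ)+4)]
          nlinarith [hmnn]

lemma geom45 (n : ℕ) : ∑ d ∈ Finset.range n, (4/5:ℝ)^d ≤ 5 := by
  have h := geom_sum_eq (show (4/5:ℝ) ≠ 1 by norm_num) n
  rw [h]
  have h3 : (4/5:ℝ)^n ≤ 1 := pow_le_one₀ (by norm_num) (by norm_num)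
  have h2 : (0:ℝ) ≤ (4/5:ℝ)^n := by positivity
  rw [div_le_iff_of_neg (by norm_num : (4/5:ℝ) - 1 < 0)]
  linarith

lemma kernel_sum (M : ℝ) {j : ℕ} (hj : 18 ≤ j) :
    ∑ i ∈ Finset.Icc 9 (j-9), rker M j i ≤ 1612800 * gg M (j-9) := by
  set D := (j+1)/3 with hD
  have hgnn : (0:ℝ) ≤ gg M (j-9) := le_of_lt (gg_pos M _)
  have hpick : ∀ x : ℕ, (4/5:ℝ)^(min x D - 9) ≤ (4/5:ℝ)^(x-9) + (4/5:ℝ)^(D-9) := by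
    intro x
    rcases le_total x D with h | h
    · rw [min_eq_left h]
      have : (0:ℝ) ≤ (4/5:ℝ)^(D-9) := by positivity
      linarith
    · rw [min_eq_right h]
      have : (0:ℝ) ≤ (4/5:ℝ)^(x-9) := by positivity
      linarith
  have htermb : ∀ i ∈ Finset.Icc 9 (j-9),
      rker M j i ≤ 40320 * gg M (j-9) *
        ((4/5:ℝ)^(i-9) + (4/5:ℝ)^(j-i-9) + (4/5:ℝ)^(D-9)) := by
    intro i hi
    rw [Finset.mem_Icc] at hi
    obtain ⟨hi9, hij⟩ := hi
    have hnn1 : (0:ℝ) ≤ (4/5:ℝ)^(i-9) := by positivity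
    have hnn2 : (0:ℝ) ≤ (4/5:ℝ)^(j-i-9) := by positivity
    have hnn3 : (0:ℝ) ≤ (4/5:ℝ)^(D-9) := by positivity
    rcases le_or_gt (2*i) (j+1) with hA | hB
    · have hch := rker_chain M hj i hi9 hA
      calc rker M j i ≤ 40320 * gg M (j-9) * (4/5:ℝ)^(min i D - 9) := hch
        _ ≤ 40320 * gg M (j-9) * ((4/5:ℝ)^(i-9) + (4/5:ℝ)^(D-9)) := by
            apply mul_le_mul_of_nonneg_left (hpick i) (by positivity)
        _ ≤ _ := by
            apply mul_le_mul_of_nonneg_left _ (by positivity)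
            linarith
    · have hsym := rker_sym M hi9 hij hj
      have hji9 : 9 ≤ j - i := by omega
      have hjiA : 2*(j-i) ≤ j+1 := by omega
      have hch := rker_chain M hj (j-i) hji9 hjiA
      rw [hsym]
      calc rker M j (j-i) ≤ 40320 * gg M (j-9) * (4/5:ℝ)^(min (j-i) D - 9) := hch
        _ ≤ 40320 * gg M (j-9) * ((4/5:ℝ)^(j-i-9) + (4/5:ℝ)^(D-9)) := by
            apply mul_le_mul_of_nonneg_left (hpick (j-i)) (by positivity)
        _ ≤ _ := by
            apply mul_le_mul_of_nonneg_left _ (by positivity)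
            linarith
  have hsum := Finset.sum_le_sum htermb
  apply le_trans hsum
  rw [← Finset.mul_sum]
  have hsplit : ∑ i ∈ Finset.Icc 9 (j-9),
      ((4/5:ℝ)^(i-9) + (4/5:ℝ)^(j-i-9) + (4/5:ℝ)^(D-9))
      = (∑ i ∈ Finset.Icc 9 (j-9), (4/5:ℝ)^(i-9))
      + (∑ i ∈ Finset.Icc 9 (j-9), (4/5:ℝ)^(j-i-9))
      + (∑ i ∈ Finset.Icc 9 (j-9), (4/5:ℝ)^(D-9)) := by
    rw [← Finset.sum_add_distrib, ← Finset.sum_add_distrib]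
  have hIccIco : Finset.Icc 9 (j-9) = Finset.Ico 9 (j-8) := by
    rw [← Finset.Ico_add_one_right_eq_Icc]
    congr 1
    omega
  have hS1 : ∑ i ∈ Finset.Icc 9 (j-9), (4/5:ℝ)^(i-9) ≤ 5 := by
    rw [hIccIco, Finset.sum_Ico_eq_sum_range]
    have : ∀ d ∈ Finset.range (j-8-9), (4/5:ℝ)^(9+d-9) = (4/5:ℝ)^d := by
      intro d _; congr 1; omega
    rw [Finset.sum_congr rfl this]
    exact geom45 _
  have hS2 : ∑ i ∈ Finset.Icc 9 (j-9), (4/5:ℝ)^(j-i-9) ≤ 5 := by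
    rw [hIccIco, Finset.sum_Ico_eq_sum_range]
    have heq : ∀ d ∈ Finset.range (j-8-9), (4/5:ℝ)^(j-(9+d)-9) = (fun d' => (4/5:ℝ)^d') ((j-8-9) - 1 - d) := by
      intro d hd
      rw [Finset.mem_range] at hd
      simp only []
      congr 1
      omega
    rw [Finset.sum_congr rfl heq, Finset.sum_range_reflect]
    exact geom45 _
  have hS3 : ∑ i ∈ Finset.Icc 9 (j-9), (4/5:ℝ)^(D-9) ≤ 30 := by
    rw [Finset.sum_const, Nat.card_Icc]
    have hcard : ((j-9+1-9 : ℕ) : ℝ) ≤ (j:ℝ)+1 := by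
      have : j-9+1-9 ≤ j+1 := by omega
      exact_mod_cast this
    have hsmul : ((j-9+1-9 : ℕ) : ℝ) * (4/5:ℝ)^(D-9) ≤ ((j:ℝ)+1) * (4/5:ℝ)^(D-9) := by
      apply mul_le_mul_of_nonneg_right hcard (by positivity)
    rw [nsmul_eq_mul]
    exact le_trans hsmul (lemJ hj)
  calc 40320 * gg M (j-9) * ∑ i ∈ Finset.Icc 9 (j-9),
        ((4/5:ℝ)^(i-9) + (4/5:ℝ)^(j-i-9) + (4/5:ℝ)^(D-9))
      ≤ 40320 * gg M (j-9) * (5 + 5 + 30) := by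
        apply mul_le_mul_of_nonneg_left _ (by positivity)
        rw [hsplit]
        linarith
    _ = 1612800 * gg M (j-9) := by ring

/-- `e⁺_n = max{e_j : 7 ≤ j ≤ n}` (as a supremum of the image set). -/
noncomputable def eplus (e : ℕ → ℝ) (n : ℕ) : ℝ := sSup (e '' Set.Icc 7 n)

/-- `f_n = Σ_{i=9}^{n-9} e⁺_i·e⁺_{n-i}·(i-1)!·(n-i-1)!/(n-10)!`. -/
noncomputable def fseq (e : ℕ → ℝ) (n : ℕ) : ℝ :=
  ∑ i ∈ Finset.Icc 9 (n - 9),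
    eplus e i * eplus e (n - i) * (Nat.factorial (i - 1) : ℝ) *
      (Nat.factorial (n - i - 1) : ℝ) / (Nat.factorial (n - 10) : ℝ)

/-- `f⁺_n = max{f_j : 18 ≤ j ≤ n}`. -/
noncomputable def fplus (e : ℕ → ℝ) (n : ℕ) : ℝ := sSup (fseq e '' Set.Icc 18 n)

lemma le_eplus {e : ℕ → ℝ} {k n : ℕ} (h7 : 7 ≤ k) (hkn : k ≤ n) : e k ≤ eplus e n :=
  le_csSup (((Set.finite_Icc 7 n).image e).bddAbove)
    ⟨k, Set.mem_Icc.mpr ⟨h7, hkn⟩, rfl⟩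

lemma eplus_le {e : ℕ → ℝ} {n : ℕ} {x : ℝ} (hn : 7 ≤ n)
    (h : ∀ k, 7 ≤ k → k ≤ n → e k ≤ x) : eplus e n ≤ x := by
  apply csSup_le
  · exact ⟨e 7, ⟨7, Set.mem_Icc.mpr ⟨le_refl _, hn⟩, rfl⟩⟩
  · rintro y ⟨k, hk, rfl⟩
    rw [Set.mem_Icc] at hk
    exact h k hk.1 hk.2

lemma eplus_nonneg {e : ℕ → ℝ} (he : ∀ n, 0 ≤ e n) (n : ℕ) : 0 ≤ eplus e n := by
  apply Real.sSup_nonneg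
  rintro y ⟨k, _, rfl⟩
  exact he k

lemma fplus_le {e : ℕ → ℝ} {n : ℕ} {x : ℝ} (hn : 18 ≤ n)
    (h : ∀ j, 18 ≤ j → j ≤ n → fseq e j ≤ x) : fplus e n ≤ x := by
  apply csSup_le
  · exact ⟨fseq e 18, ⟨18, Set.mem_Icc.mpr ⟨le_refl _, hn⟩, rfl⟩⟩
  · rintro y ⟨j, hj, rfl⟩
    rw [Set.mem_Icc] at hj
    exact h j hj.1 hj.2

theorem stmt_12 (K : ℝ) (hK : 0 < K) (e : ℕ → ℝ) (he : ∀ n : ℕ, 0 ≤ e n)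
    (hrec : ∀ n : ℕ, 16 ≤ n →
      e (n - 1) ≤ K / (n : ℝ) * (1 + eplus e (n - 3) + fplus e (n + 2))) :
    ∃ B : ℝ, ∀ n : ℕ, 7 ≤ n → (n : ℝ) * e n ≤ B := by
  classical
  set P : ℝ := eplus e 14 + 1 with hPdef
  have hP1 : 1 ≤ P := by
    have := eplus_nonneg he 14
    simp only [hPdef]; linarith
  have hP0 : 0 ≤ P := by linarith
  set M : ℝ := K * (1 + P + 1612800 * P^2) with hMdef
  have hM0 : 0 < M := by
    have : (0:ℝ) < 1 + P + 1612800 * P^2 := by positivity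
    positivity
  -- the budget lemma
  have hbudget : ∀ m : ℕ, 15 ≤ m → (∀ k, 7 ≤ k → k < m → e k ≤ P * gg M k) →
      e m ≤ K / ((m:ℝ)+1) * (1 + P * gg M (m-2) + 1612800 * P^2 * gg M (m-6)) := by
    intro m hm IH
    have hr := hrec (m+1) (by omega)
    have i1 : m + 1 - 1 = m := by omega
    have i2 : m + 1 - 3 = m - 2 := by omega
    have i3 : m + 1 + 2 = m + 3 := by omega
    rw [i1, i2, i3] at hr
    have hcast : ((m+1 : ℕ) : ℝ) = (m:ℝ) + 1 := by push_cast; ring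
    rw [hcast] at hr
    have hE : eplus e (m-2) ≤ P * gg M (m-2) := by
      apply eplus_le (by omega)
      intro k hk7 hk
      calc e k ≤ P * gg M k := IH k hk7 (by omega)
        _ ≤ P * gg M (m-2) := mul_le_mul_of_nonneg_left (gg_mono M hk) hP0
    have hF : fplus e (m+3) ≤ 1612800 * P^2 * gg M (m-6) := by
      apply fplus_le (by omega)
      intro j hj18 hjm
      have hterm : ∀ i ∈ Finset.Icc 9 (j-9),
          eplus e i * eplus e (j - i) * (Nat.factorial (i - 1) : ℝ) *
            (Nat.factorial (j - i - 1) : ℝ) / (Nat.factorial (j - 10) : ℝ)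
          ≤ P^2 * rker M j i := by
        intro i hi
        rw [Finset.mem_Icc] at hi
        obtain ⟨hi9, hij⟩ := hi
        have hbound : ∀ l : ℕ, 9 ≤ l → l ≤ j - 9 → eplus e l ≤ P * gg M l := by
          intro l hl9 hlj
          apply eplus_le (by omega)
          intro k hk7 hkl
          calc e k ≤ P * gg M k := IH k hk7 (by omega)
            _ ≤ P * gg M l := mul_le_mul_of_nonneg_left (gg_mono M hkl) hP0
        have h1 := hbound i hi9 hij
        have h2 := hbound (j-i) (by omega) (by omega)
        have hnn1 := eplus_nonneg he i
        have hnn2 := eplus_nonneg he (j-i)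
        have hEE : eplus e i * eplus e (j-i) ≤ P^2 * (gg M i * gg M (j-i)) := by
          calc eplus e i * eplus e (j-i) ≤ (P * gg M i) * (P * gg M (j-i)) :=
                mul_le_mul h1 h2 hnn2 (mul_nonneg hP0 (gg_pos M i).le)
            _ = P^2 * (gg M i * gg M (j-i)) := by ring
        have hfnn : (0:ℝ) ≤ (Nat.factorial (i-1) : ℝ) * (Nat.factorial (j-i-1) : ℝ) /
            (Nat.factorial (j-10) : ℝ) := by positivity
        calc eplus e i * eplus e (j - i) * (Nat.factorial (i - 1) : ℝ) *
              (Nat.factorial (j - i - 1) : ℝ) / (Nat.factorial (j - 10) : ℝ)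
            = (eplus e i * eplus e (j-i)) *
              ((Nat.factorial (i-1) : ℝ) * (Nat.factorial (j-i-1) : ℝ) /
                (Nat.factorial (j-10) : ℝ)) := by ring
          _ ≤ (P^2 * (gg M i * gg M (j-i))) *
              ((Nat.factorial (i-1) : ℝ) * (Nat.factorial (j-i-1) : ℝ) /
                (Nat.factorial (j-10) : ℝ)) := mul_le_mul_of_nonneg_right hEE hfnn
          _ = P^2 * rker M j i := by unfold rker; ring
      calc fseq e j ≤ ∑ i ∈ Finset.Icc 9 (j-9), P^2 * rker M j i := by
            unfold fseq; exact Finset.sum_le_sum hterm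
        _ = P^2 * ∑ i ∈ Finset.Icc 9 (j-9), rker M j i := by rw [Finset.mul_sum]
        _ ≤ P^2 * (1612800 * gg M (j-9)) := by
            apply mul_le_mul_of_nonneg_left (kernel_sum M hj18) (by positivity)
        _ ≤ 1612800 * P^2 * gg M (m-6) := by
            have := gg_mono M (show j - 9 ≤ m - 6 by omega)
            nlinarith [sq_nonneg P, gg_pos M (j-9), gg_pos M (m-6)]
    calc e m ≤ K / ((m:ℝ)+1) * (1 + eplus e (m-2) + fplus e (m+3)) := hr
      _ ≤ K / ((m:ℝ)+1) * (1 + P * gg M (m-2) + 1612800 * P^2 * gg M (m-6)) := by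
          apply mul_le_mul_of_nonneg_left _ (by positivity)
          linarith
  -- the profile inequality
  have hprofile : ∀ m : ℕ, 15 ≤ m →
      K / ((m:ℝ)+1) * (1 + P * gg M (m-2) + 1612800 * P^2 * gg M (m-6)) ≤ P * gg M m := by
    intro m hm
    have hg2 := one_le_gg M (m-2)
    have hg6 : gg M (m-6) ≤ gg M (m-2) := gg_mono M (by omega)
    have hstep1 : 1 + P * gg M (m-2) + 1612800 * P^2 * gg M (m-6)
        ≤ (1 + P + 1612800 * P^2) * gg M (m-2) := by
      have h1 : 1612800 * P^2 * gg M (m-6) ≤ 1612800 * P^2 * gg M (m-2) :=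
        mul_le_mul_of_nonneg_left hg6 (by positivity)
      nlinarith [sq_nonneg P]
    have hmpos : (0:ℝ) < (m:ℝ) + 1 := by positivity
    have hsplit : gg M m = gg M (m-2) * ss M (m-1) * ss M m := by
      have e1 : m - 2 + 1 = m - 1 := by omega
      have e2 : m - 1 + 1 = m := by omega
      calc gg M m = gg M (m-1+1) := by rw [e2]
        _ = gg M (m-1) * ss M (m-1+1) := gg_succ M (m-1)
        _ = gg M (m-2+1) * ss M m := by rw [e1, e2]
        _ = gg M (m-2) * ss M (m-2+1) * ss M m := by rw [gg_succ M (m-2)]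
        _ = gg M (m-2) * ss M (m-1) * ss M m := by rw [e1]
    -- key : M ≤ P * ((m+1) * (ss M (m-1) * ss M m))
    have hssm : ss M m ^ 2 = vv M m := ss_sq M m
    have hanti : ss M m ≤ ss M (m-1) := by
      unfold ss
      apply Real.sqrt_le_sqrt
      unfold vv
      have hb1 : ¬ m ≤ 13 := by omega
      have hb2 : ¬ m - 1 ≤ 13 := by omega
      rw [if_neg hb1, if_neg hb2]
      apply max_le_max (le_refl 1)
      apply div_le_div_of_nonneg_left hM0.le
      · have : (0:ℝ) < ((m-1 : ℕ):ℝ) := by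
          have : (1:ℕ) ≤ m - 1 := by omega
          exact_mod_cast Nat.pos_of_ne_zero (by omega)
        exact this
      · have : ((m-1:ℕ):ℝ) ≤ (m:ℝ) := by exact_mod_cast Nat.sub_le m 1
        exact this
    have hkey : M ≤ ((m:ℝ)+1) * (ss M (m-1) * ss M m) := by
      have hvm : vv M m = max 1 (M / m) := by
        unfold vv; rw [if_neg (by omega : ¬ m ≤ 13)]
      have hmm : (0:ℝ) < (m:ℝ) := by
        exact_mod_cast Nat.pos_of_ne_zero (by omega)
      have h1 : M ≤ ((m:ℝ)+1) * vv M m := by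
        rw [hvm]
        rcases le_total M (m:ℝ) with hc | hc
        · calc M ≤ (m:ℝ) := hc
            _ ≤ ((m:ℝ)+1) * 1 := by linarith
            _ ≤ ((m:ℝ)+1) * max 1 (M/(m:ℝ)) := by
                apply mul_le_mul_of_nonneg_left (le_max_left _ _) (by positivity)
        · have h2 : M ≤ ((m:ℝ)+1) * (M / (m:ℝ)) := by
            rw [mul_div_assoc']
            rw [le_div_iff₀ hmm]
            nlinarith
          calc M ≤ ((m:ℝ)+1) * (M/(m:ℝ)) := h2
            _ ≤ ((m:ℝ)+1) * max 1 (M/(m:ℝ)) := by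
                apply mul_le_mul_of_nonneg_left (le_max_right _ _) (by positivity)
      have h3 : vv M m ≤ ss M (m-1) * ss M m := by
        calc vv M m = ss M m * ss M m := by rw [← hssm]; ring
          _ ≤ ss M (m-1) * ss M m :=
            mul_le_mul_of_nonneg_right hanti (ss_pos M m).le
      calc M ≤ ((m:ℝ)+1) * vv M m := h1
        _ ≤ ((m:ℝ)+1) * (ss M (m-1) * ss M m) := by
            apply mul_le_mul_of_nonneg_left h3 (by positivity)
    calc K / ((m:ℝ)+1) * (1 + P * gg M (m-2) + 1612800 * P^2 * gg M (m-6))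
        ≤ K / ((m:ℝ)+1) * ((1 + P + 1612800 * P^2) * gg M (m-2)) := by
          apply mul_le_mul_of_nonneg_left hstep1 (by positivity)
      _ = M * gg M (m-2) / ((m:ℝ)+1) := by rw [hMdef]; ring
      _ ≤ P * gg M m := by
          rw [hsplit, div_le_iff₀ hmpos]
          have hgnn : (0:ℝ) ≤ gg M (m-2) := (gg_pos M _).le
          have := mul_le_mul_of_nonneg_right hkey hgnn
          calc M * gg M (m-2) ≤ ((m:ℝ)+1) * (ss M (m-1) * ss M m) * gg M (m-2) := this
            _ ≤ P * (((m:ℝ)+1) * (ss M (m-1) * ss M m) * gg M (m-2)) := by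
                apply le_mul_of_one_le_left _ hP1
                have := ss_pos M (m-1)
                have := ss_pos M m
                positivity
            _ = P * (gg M (m-2) * ss M (m-1) * ss M m) * ((m:ℝ)+1) := by ring
  -- the main induction
  have key : ∀ m : ℕ, 7 ≤ m → e m ≤ P * gg M m := by
    intro m
    induction m using Nat.strong_induction_on with
    | _ m IH =>
      intro hm
      rcases le_or_gt m 14 with h14 | h15
      · calc e m ≤ eplus e 14 := le_eplus hm h14
          _ ≤ P := by simp only [hPdef]; linarith
          _ ≤ P * gg M m := le_mul_of_one_le_right hP0 (one_le_gg M m)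
      · have hb := hbudget m (by omega) (fun k hk7 hklt => IH k hklt hk7)
        exact le_trans hb (hprofile m (by omega))
  -- gg is eventually constant, hence bounded
  set N0 : ℕ := 14 + Nat.ceil M with hN0def
  set G : ℝ := gg M N0 with hGdef
  have hGb : ∀ n, gg M n ≤ G := by
    intro n
    rcases le_or_gt n N0 with h | h
    · exact gg_mono M h
    · have hsplit : gg M N0 * (∏ t ∈ Finset.Ioc N0 n, ss M t) = gg M n := by
        unfold gg; exact Finset.prod_Ioc_consecutive _ (by omega) h.le
      have hone : ∀ t ∈ Finset.Ioc N0 n, ss M t = 1 := by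
        intro t ht
        rw [Finset.mem_Ioc] at ht
        have ht14 : ¬ t ≤ 13 := by omega
        have htM : M ≤ (t:ℝ) := by
          calc M ≤ (Nat.ceil M : ℝ) := Nat.le_ceil M
            _ ≤ (t:ℝ) := by
                have : Nat.ceil M ≤ t := by omega
                exact_mod_cast this
        have htpos : (0:ℝ) < (t:ℝ) := by
          have : 0 < t := by omega
          exact_mod_cast this
        unfold ss vv
        rw [if_neg ht14, max_eq_left (by rw [div_le_one htpos]; exact htM), Real.sqrt_one]
      rw [← hsplit, Finset.prod_eq_one hone, mul_one]
  have hG1 : 1 ≤ G := one_le_gg M N0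
  have hEG : ∀ k, 7 ≤ k → e k ≤ P * G := by
    intro k hk
    calc e k ≤ P * gg M k := key k hk
      _ ≤ P * G := mul_le_mul_of_nonneg_left (hGb k) hP0
  -- final bound
  refine ⟨max (14 * (P * G)) (K * (1 + P * G + 1612800 * P^2 * G)), ?_⟩
  intro n hn
  rcases le_or_gt n 14 with h14 | h15
  · have h1 : (n:ℝ) ≤ 14 := by exact_mod_cast h14
    have h2 : e n ≤ P * G := hEG n hn
    have h3 : (n:ℝ) * e n ≤ 14 * (P * G) := by
      apply mul_le_mul h1 h2 (he n) (by norm_num)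
    exact le_trans h3 (le_max_left _ _)
  · have hb := hbudget n (by omega) (fun k hk7 _ => key k hk7)
    have hC : 1 + P * gg M (n-2) + 1612800 * P^2 * gg M (n-6)
        ≤ 1 + P * G + 1612800 * P^2 * G := by
      have h2 := mul_le_mul_of_nonneg_left (hGb (n-2)) hP0
      have h6 : 1612800 * P^2 * gg M (n-6) ≤ 1612800 * P^2 * G :=
        mul_le_mul_of_nonneg_left (hGb (n-6)) (by positivity)
      linarith
    have hnpos : (0:ℝ) < (n:ℝ) + 1 := by positivity
    have hen : e n ≤ K / ((n:ℝ)+1) * (1 + P * G + 1612800 * P^2 * G) := by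
      calc e n ≤ K / ((n:ℝ)+1) * (1 + P * gg M (n-2) + 1612800 * P^2 * gg M (n-6)) := hb
        _ ≤ K / ((n:ℝ)+1) * (1 + P * G + 1612800 * P^2 * G) := by
            apply mul_le_mul_of_nonneg_left hC (by positivity)
    have hCnn : (0:ℝ) ≤ 1 + P * G + 1612800 * P^2 * G := by positivity
    have h4 : (n:ℝ) * e n ≤ (n:ℝ) * (K / ((n:ℝ)+1) * (1 + P * G + 1612800 * P^2 * G)) := by
      apply mul_le_mul_of_nonneg_left hen (Nat.cast_nonneg n)
    have h5 : (n:ℝ) * (K / ((n:ℝ)+1) * (1 + P * G + 1612800 * P^2 * G))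
        ≤ K * (1 + P * G + 1612800 * P^2 * G) := by
      rw [div_mul_eq_mul_div, mul_div_assoc']
      rw [div_le_iff₀ hnpos]
      have hnn : (0:ℝ) ≤ (n:ℝ) := Nat.cast_nonneg n
      nlinarith [mul_nonneg hK.le hCnn]
    exact le_trans (le_trans h4 h5) (le_max_right _ _)
end

section
/- Let c > 0 and M ≥ 0, and let (d_n)_{n≥0}, (g_n)_{n≥0}, (h_n)_{n≥0} be real sequences such that g_n ≥ c and |h_n| ≤ M for all n, d_{n+1} = −(1 + g_n)·d_n − h_n for all n, and d_n → 0 as n → ∞. Then |d_n| ≤ M/c for all n; more precisely, |d_n| ≤ Σ_{k≥n} |h_k| / Π_{i=n}^{k} (1 + g_i) ≤ M·Σ_{j≥1} (1+c)^{−j} = M/c. -/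
theorem stmt_17 (c M : ℝ) (hc : 0 < c) (hM : 0 ≤ M)
    (d g h : ℕ → ℝ) (hg : ∀ n : ℕ, c ≤ g n) (hh : ∀ n : ℕ, |h n| ≤ M)
    (hrec : ∀ n : ℕ, d (n + 1) = -(1 + g n) * d n - h n)
    (hlim : Filter.Tendsto d Filter.atTop (nhds 0)) :
    ∀ n : ℕ,
      |d n| ≤ (∑' k : ℕ, |h (n + k)| / ∏ i ∈ Finset.Icc n (n + k), (1 + g i)) ∧
      (∑' k : ℕ, |h (n + k)| / ∏ i ∈ Finset.Icc n (n + k), (1 + g i))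
          ≤ M * ∑' j : ℕ, ((1 + c)⁻¹) ^ (j + 1) ∧
      M * (∑' j : ℕ, ((1 + c)⁻¹) ^ (j + 1)) = M / c ∧
      |d n| ≤ M / c := by
  have hc1 : (0:ℝ) < 1 + c := by linarith
  have hr0 : (0:ℝ) ≤ (1 + c)⁻¹ := inv_nonneg.2 hc1.le
  have hr1 : (1 + c)⁻¹ < 1 := by
    rw [inv_lt_one_iff₀]; right; linarith
  have hgpos : ∀ i, (0:ℝ) < 1 + g i := fun i => by have := hg i; linarith
  -- geometric sum facts
  have hgeo : Summable (fun j : ℕ => ((1 + c)⁻¹) ^ j) :=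
    summable_geometric_of_lt_one hr0 hr1
  have hgeo1 : Summable (fun j : ℕ => ((1 + c)⁻¹) ^ (j + 1)) :=
    hgeo.comp_injective Nat.succ_injective
  have hgeoM : Summable (fun j : ℕ => M * ((1 + c)⁻¹) ^ (j + 1)) := hgeo1.mul_left M
  have htsum1 : (∑' j : ℕ, ((1 + c)⁻¹) ^ (j + 1)) = (1 + c)⁻¹ * (1 - (1 + c)⁻¹)⁻¹ := by
    simp_rw [pow_succ', tsum_mul_left, tsum_geometric_of_lt_one hr0 hr1]
  have hMc : M * (∑' j : ℕ, ((1 + c)⁻¹) ^ (j + 1)) = M / c := by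
    rw [htsum1]
    have h1 : (1:ℝ) - (1 + c)⁻¹ = c / (1 + c) := by field_simp; ring
    rw [h1]
    field_simp
  intro n
  set a : ℕ → ℝ := fun k => |h (n + k)| / ∏ i ∈ Finset.Icc n (n + k), (1 + g i) with ha
  have hprodpos : ∀ k, 0 < ∏ i ∈ Finset.Icc n (n + k), (1 + g i) := fun k =>
    Finset.prod_pos fun i _ => hgpos i
  have hprodge : ∀ k, (1 + c) ^ (k + 1) ≤ ∏ i ∈ Finset.Icc n (n + k), (1 + g i) := by
    intro k
    calc (1 + c) ^ (k + 1) = ∏ _i ∈ Finset.Icc n (n + k), (1 + c) := by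
          rw [Finset.prod_const, Nat.card_Icc]; congr 1; omega
      _ ≤ _ := Finset.prod_le_prod (fun i _ => hc1.le)
          (fun i _ => by have := hg i; linarith)
  have hanneg : ∀ k, 0 ≤ a k := fun k => div_nonneg (abs_nonneg _) (hprodpos k).le
  have hak : ∀ k, a k ≤ M * ((1 + c)⁻¹) ^ (k + 1) := by
    intro k
    have h1 : a k ≤ M / (1 + c) ^ (k + 1) :=
      div_le_div₀ hM (hh _) (pow_pos hc1 _) (hprodge k)
    calc a k ≤ M / (1 + c) ^ (k + 1) := h1
      _ = M * ((1 + c)⁻¹) ^ (k + 1) := by rw [div_eq_mul_inv, inv_pow]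
  have hasum : Summable a := Summable.of_nonneg_of_le hanneg hak hgeoM
  have hle2 : (∑' k, a k) ≤ M * ∑' j : ℕ, ((1 + c)⁻¹) ^ (j + 1) := by
    rw [← tsum_mul_left]
    exact Summable.tsum_le_tsum hak hasum hgeoM
  -- main inductive bound
  set P : ℕ → ℝ := fun K => ∏ i ∈ Finset.Ico n (n + K), (1 + g i) with hP
  have hPpos : ∀ K, 0 < P K := fun K => Finset.prod_pos fun i _ => hgpos i
  have hPge1 : ∀ K, 1 ≤ P K := by
    intro K
    simp only [hP]
    calc (1:ℝ) = ∏ _i ∈ Finset.Ico n (n + K), (1:ℝ) := by rw [Finset.prod_const, one_pow]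
      _ ≤ _ := Finset.prod_le_prod (fun i _ => zero_le_one)
          (fun i _ => by have := hg i; linarith)
  have claim : ∀ K, |d n| ≤ (∑ k ∈ Finset.range K, a k) + |d (n + K)| / P K := by
    intro K
    induction K with
    | zero => simp [hP]
    | succ K ih =>
      have hPsucc : P (K + 1) = P K * (1 + g (n + K)) := by
        rw [hP]
        show (∏ i ∈ Finset.Ico n (n + (K + 1)), (1 + g i)) = _
        rw [show n + (K + 1) = (n + K) + 1 from rfl,
          Finset.prod_Ico_succ_top (Nat.le_add_right n K)]
      have haK : a K = |h (n + K)| / P (K + 1) := by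
        rw [ha, hP]
        show |h (n + K)| / (∏ i ∈ Finset.Icc n (n + K), (1 + g i))
            = |h (n + K)| / (∏ i ∈ Finset.Ico n (n + (K + 1)), (1 + g i))
        rw [show n + (K + 1) = (n + K) + 1 from rfl, Finset.Ico_add_one_right_eq_Icc]
      have hdK : |d (n + K)| ≤ (|d (n + K + 1)| + |h (n + K)|) / (1 + g (n + K)) := by
        have hrecK := hrec (n + K)
        have h2 : (1 + g (n + K)) * d (n + K) = -(d (n + K + 1)) - h (n + K) := by
          linarith [hrecK]
        have habs : (1 + g (n + K)) * |d (n + K)| ≤ |d (n + K + 1)| + |h (n + K)| := by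
          have h3 : |(1 + g (n + K)) * d (n + K)| = (1 + g (n + K)) * |d (n + K)| := by
            rw [abs_mul, abs_of_pos (hgpos (n + K))]
          calc (1 + g (n + K)) * |d (n + K)| = |(1 + g (n + K)) * d (n + K)| := h3.symm
            _ = |(-(d (n + K + 1)) - h (n + K))| := by rw [h2]
            _ ≤ |(-(d (n + K + 1)))| + |h (n + K)| := abs_sub _ _
            _ = |d (n + K + 1)| + |h (n + K)| := by rw [abs_neg]
        rw [le_div_iff₀ (hgpos (n + K))]
        linarith [habs]
      have hstep : |d (n + K)| / P K ≤ a K + |d (n + K + 1)| / P (K + 1) := by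
        have h4 : |d (n + K)| / P K
            ≤ ((|d (n + K + 1)| + |h (n + K)|) / (1 + g (n + K))) / P K := by
          gcongr
          exact (hPpos K).le
        have h5 : ((|d (n + K + 1)| + |h (n + K)|) / (1 + g (n + K))) / P K
            = a K + |d (n + K + 1)| / P (K + 1) := by
          rw [haK, hPsucc]
          have hp := hPpos K
          have hgp := hgpos (n + K)
          field_simp
          ring
        linarith [h4, h5.le, h5.ge]
      calc |d n| ≤ (∑ k ∈ Finset.range K, a k) + |d (n + K)| / P K := ih
        _ ≤ (∑ k ∈ Finset.range K, a k) + (a K + |d (n + K + 1)| / P (K + 1)) := by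
            linarith [hstep]
        _ = (∑ k ∈ Finset.range (K + 1), a k) + |d (n + K + 1)| / P (K + 1) := by
            rw [Finset.sum_range_succ]; ring
  have claim2 : ∀ K, |d n| ≤ (∑ k ∈ Finset.range K, a k) + |d (n + K)| := by
    intro K
    have := div_le_self (abs_nonneg (d (n + K))) (hPge1 K)
    linarith [claim K]
  have htail : Filter.Tendsto (fun K => |d (n + K)|) Filter.atTop (nhds 0) := by
    have h1 : Filter.Tendsto (fun K : ℕ => d (n + K)) Filter.atTop (nhds 0) := by
      have h2 := hlim.comp (Filter.tendsto_add_atTop_nat n)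
      simpa [Function.comp_def, Nat.add_comm] using h2
    simpa using h1.abs
  have hT : Filter.Tendsto (fun K => (∑ k ∈ Finset.range K, a k) + |d (n + K)|)
      Filter.atTop (nhds ((∑' k, a k) + 0)) :=
    (hasum.hasSum.tendsto_sum_nat).add htail
  have hle1 : |d n| ≤ ∑' k, a k := by
    have := ge_of_tendsto' hT claim2
    simpa using this
  exact ⟨hle1, hle2, hMc, hle1.trans (hle2.trans (le_of_eq hMc))⟩
end
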